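/- arXiv:1703.05797 — 2 statements merged into one kernel-verified Lean document; each statement's English description precedes it below -/
import Mathlib

section
/- Let n and w be integers with n ≥ 2 and 2 ≤ 2w ≤ n−1, set α = ⌊w/(n−2w)⌋ and s = w mod (n−2w), and let 𝒲 = λA_𝒲 − B_𝒲 be the n×n skew-symmetric pencil given by the direct sum of s copies of M_{α+1} followed by n−2w−s copies of M_α. Then the ℂ-linear subspace T := {(XᵀA_𝒲 + A_𝒲X, XᵀB_𝒲 + B_𝒲X) : X ∈ ℂ^{n×n}} of the space of pairs of n×n complex matrices (the tangent space at 𝒲 to the congruence orbit of 𝒲) has dimension n(n−1) − (n−2w−1)(n−w); equivalently, the codimension of the congruence orbit of 𝒲 in the n(n−1)-dimensional space of n×n skew-symmetric pencils equals (n−2w−1)(n−w). -/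
open Matrix

noncomputable section

/-- The `k × (k+1)` matrix `G_k` with `(G_k)_{i,i} = 1` and all other entries `0`. -/
def Gmat (k : ℕ) : Matrix (Fin k) (Fin (k+1)) ℂ := fun i j => if j.1 = i.1 then 1 else 0

/-- The `k × (k+1)` matrix `F_k` with `(F_k)_{i,i+1} = 1` and all other entries `0`. -/
def Fmat (k : ℕ) : Matrix (Fin k) (Fin (k+1)) ℂ := fun i j => if j.1 = i.1 + 1 then 1 else 0

/-- The `k × k` upper triangular Jordan block `J_k(μ)`. -/
def Jord (k : ℕ) (μ : ℂ) : Matrix (Fin k) (Fin k) ℂ :=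
  fun i j => if i = j then μ else if j.1 = i.1 + 1 then 1 else 0

/-- λ-coefficient of the canonical skew-symmetric singular block
`M_k = λ [[0, G_k],[−G_kᵀ, 0]] − [[0, F_k],[−F_kᵀ, 0]]`, written as a single
`(2k+1) × (2k+1)` matrix (rows/columns `0,…,k-1` correspond to the first block
row/column, rows/columns `k,…,2k` to the second). -/
def MA (k : ℕ) : Matrix (Fin (2*k+1)) (Fin (2*k+1)) ℂ := fun i j =>
  if i.1 < k ∧ j.1 = k + i.1 then 1
  else if j.1 < k ∧ i.1 = k + j.1 then -1 else 0

/-- Constant coefficient of `M_k` (so that `M_k = λ • MA k − MB k`). -/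
def MB (k : ℕ) : Matrix (Fin (2*k+1)) (Fin (2*k+1)) ℂ := fun i j =>
  if i.1 < k ∧ j.1 = k + i.1 + 1 then 1
  else if j.1 < k ∧ i.1 = k + j.1 + 1 then -1 else 0

/-- Sizes of the blocks in the generic skew-symmetric pencil of rank `2w`:
the first `s = w mod (n−2w)` blocks are `M_{α+1}`, the rest are `M_α`,
`α = ⌊w/(n−2w)⌋`. -/
def genIdx (n w : ℕ) (i : Fin (n - 2*w)) : ℕ :=
  if i.1 < w % (n - 2*w) then w / (n - 2*w) + 1 else w / (n - 2*w)

/-- λ-coefficient of the generic pencil `𝒲 = M_{α+1} ⊕ ⋯ ⊕ M_{α+1} ⊕ M_α ⊕ ⋯ ⊕ M_α`. -/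
def WA (n w : ℕ) :
    Matrix ((i : Fin (n - 2*w)) × Fin (2 * genIdx n w i + 1))
           ((i : Fin (n - 2*w)) × Fin (2 * genIdx n w i + 1)) ℂ :=
  Matrix.blockDiagonal' fun i => MA (genIdx n w i)

/-- Constant coefficient of the generic pencil `𝒲`. -/
def WB (n w : ℕ) :
    Matrix ((i : Fin (n - 2*w)) × Fin (2 * genIdx n w i + 1))
           ((i : Fin (n - 2*w)) × Fin (2 * genIdx n w i + 1)) ℂ :=
  Matrix.blockDiagonal' fun i => MB (genIdx n w i)

/-- Congruence orbit of the pencil `λA − B`: all pencils `λ SᵀAS − SᵀBS`, `S` invertible. -/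
def congOrbit {p : Type*} [Fintype p] [DecidableEq p] (A B : Matrix p p ℂ) :
    Set (Matrix p p ℂ × Matrix p p ℂ) :=
  {P | ∃ S : Matrix p p ℂ, IsUnit S ∧ P = (Sᵀ * A * S, Sᵀ * B * S)}

/-- Strict equivalence orbit of the pencil `λA − B`: all pencils `λ QAR − QBR`,
`Q, R` invertible. -/
def eqvOrbit {R C : Type*} [Fintype R] [Fintype C] [DecidableEq R] [DecidableEq C]
    (A B : Matrix R C ℂ) : Set (Matrix R C ℂ × Matrix R C ℂ) :=
  {P | ∃ (Q : Matrix R R ℂ) (Z : Matrix C C ℂ), IsUnit Q ∧ IsUnit Z ∧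
    P = (Q * A * Z, Q * B * Z)}

/-- The (normal) rank of the pencil `λA − B`, i.e. the rank of `λA − B` as a matrix
over the field of rational functions `ℂ(λ)`. -/
def pencilRank {p : Type*} [Fintype p] (A B : Matrix p p ℂ) : ℕ :=
  Matrix.rank (Matrix.of fun i j =>
    (RatFunc.X : RatFunc ℂ) * algebraMap ℂ (RatFunc ℂ) (A i j) -
      algebraMap ℂ (RatFunc ℂ) (B i j))

/-- An `m × m` matrix polynomial of grade `d` is a tuple `(A_0, …, A_d)`,
identified with `P(λ) = λᵈA_d + ⋯ + λA_1 + A_0`.  Its (normal) rank is its rank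
as a matrix over `ℂ(λ)`. -/
def polyRank {m d : ℕ} (P : Fin (d+1) → Matrix (Fin m) (Fin m) ℂ) : ℕ :=
  Matrix.rank (Matrix.of fun a b =>
    ∑ i : Fin (d+1), (RatFunc.X : RatFunc ℂ) ^ i.1 * algebraMap ℂ (RatFunc ℂ) (P i a b))

/-- λ-coefficient of the block-pencil linearization `L_P` of an `m × m` matrix polynomial
of odd grade `d`.  Block row/column indices are `0`-based (`j = i − 1` for the `1`-based
index `i` of the paper): the `(j,j)` block is `λA_{d−j} + A_{d−j−1}` for even `j` and `0`
for odd `j`; the `(j,j+1)` block is `−I` for even `j` and `−λI` for odd `j`; the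
`(j+1,j)` block is `I` for even `j` and `λI` for odd `j`. -/
def LA {m d : ℕ} (P : Fin (d+1) → Matrix (Fin m) (Fin m) ℂ) :
    Matrix (Fin d × Fin m) (Fin d × Fin m) ℂ := fun p q =>
  if p.1 = q.1 then (if p.1.1 % 2 = 0 then P ⟨d - p.1.1, by omega⟩ p.2 q.2 else 0)
  else if q.1.1 = p.1.1 + 1 then (if p.1.1 % 2 = 1 ∧ p.2 = q.2 then -1 else 0)
  else if p.1.1 = q.1.1 + 1 then (if q.1.1 % 2 = 1 ∧ p.2 = q.2 then 1 else 0)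
  else 0

/-- Constant coefficient of the linearization `L_P` (so that `L_P = λ • LA P − LB P`). -/
def LB {m d : ℕ} (P : Fin (d+1) → Matrix (Fin m) (Fin m) ℂ) :
    Matrix (Fin d × Fin m) (Fin d × Fin m) ℂ := fun p q =>
  if p.1 = q.1 then (if p.1.1 % 2 = 0 then -(P ⟨d - p.1.1 - 1, by omega⟩ p.2 q.2) else 0)
  else if q.1.1 = p.1.1 + 1 then (if p.1.1 % 2 = 0 ∧ p.2 = q.2 then 1 else 0)
  else if p.1.1 = q.1.1 + 1 then (if q.1.1 % 2 = 0 ∧ p.2 = q.2 then -1 else 0)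
  else 0

/-- The generalized Sylvester space: all pencils `L_Q` for `Q` an `m × m`
skew-symmetric matrix polynomial of grade `d`. -/
def GSYL (m d : ℕ) :
    Set (Matrix (Fin d × Fin m) (Fin d × Fin m) ℂ × Matrix (Fin d × Fin m) (Fin d × Fin m) ℂ) :=
  {L | ∃ Q : Fin (d+1) → Matrix (Fin m) (Fin m) ℂ,
    (∀ i, (Q i)ᵀ = -(Q i)) ∧ L = (LA Q, LB Q)}

/-- Square of the Frobenius norm of a complex matrix. -/
def frobSq {p q : Type*} [Fintype p] [Fintype q] (A : Matrix p q ℂ) : ℝ :=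
  ∑ i, ∑ j, ‖A i j‖ ^ 2

/-- The point of `ℂ^(2n²)` given by the entries of the pair of matrices `(C, D)`. -/
def pairPoint {n : ℕ} (C D : Matrix (Fin n) (Fin n) ℂ) :
    (Fin n × Fin n) ⊕ (Fin n × Fin n) → ℂ :=
  Sum.elim (fun x => C x.1 x.2) (fun x => D x.1 x.2)

/-- The linear map `X ↦ (XᵀA + AX, XᵀB + BX)` whose range is the tangent space at
`λA − B` to the congruence orbit of `λA − B`. -/
def congTangentMap {p : Type*} [Fintype p] [DecidableEq p] (A B : Matrix p p ℂ) :
    Matrix p p ℂ →ₗ[ℂ] Matrix p p ℂ × Matrix p p ℂ where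
  toFun X := (Xᵀ * A + A * X, Xᵀ * B + B * X)
  map_add' X Y := by
    simp only [Matrix.transpose_add, Matrix.add_mul, Matrix.mul_add, Prod.mk_add_mk,
      Prod.mk.injEq]
    constructor <;> abel
  map_smul' c X := by
    simp only [Matrix.transpose_smul, Matrix.smul_mul, Matrix.mul_smul, smul_add,
      RingHom.id_apply, Prod.smul_mk]

/-- The canonical skew-symmetric Smith form: the direct sum of the `2 × 2` blocks
`[[0, g_j],[−g_j, 0]]`, `j = 1, …, r`, followed by an `(m−2r) × (m−2r)` zero block. -/
def skewSmith (m r : ℕ) (g : Fin r → Polynomial ℂ) : Matrix (Fin m) (Fin m) (Polynomial ℂ) :=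
  fun i j =>
    if h : i.1 + 1 = j.1 ∧ i.1 % 2 = 0 ∧ j.1 < 2*r then g ⟨i.1 / 2, by omega⟩
    else if h' : j.1 + 1 = i.1 ∧ j.1 % 2 = 0 ∧ i.1 < 2*r then -(g ⟨j.1 / 2, by omega⟩)
    else 0

/-- Descriptor of a canonical block of the skew-symmetric Kronecker canonical form:
`H h μ` is the regular block `H_h(μ)` for a finite eigenvalue `μ`, `K k` is the regular
block `K_k` for the infinite eigenvalue, and `M k` is the singular block `M_k`. -/
inductive SkewBlock where
  | H : ℕ → ℂ → SkewBlock
  | K : ℕ → SkewBlock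
  | M : ℕ → SkewBlock

/-- Size of a canonical skew-symmetric block. -/
def blockSize : SkewBlock → ℕ
  | .H h _ => 2*h
  | .K k => 2*k
  | .M k => 2*k + 1

/-- Admissibility of a block: `H_h(μ)` requires `h ≥ 1` and `K_k` requires `k ≥ 1`. -/
def validBlock : SkewBlock → Prop
  | .H h _ => 1 ≤ h
  | .K k => 1 ≤ k
  | .M _ => True

/-- λ-coefficient of a canonical skew-symmetric block:
`H_h(μ) = λ[[0, I_h],[−I_h, 0]] − [[0, J_h(μ)],[−J_h(μ)ᵀ, 0]]`,
`K_k = λ[[0, J_k(0)],[−J_k(0)ᵀ, 0]] − [[0, I_k],[−I_k, 0]]`,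
`M_k = λ[[0, G_k],[−G_kᵀ, 0]] − [[0, F_k],[−F_kᵀ, 0]]`. -/
def blockA : (b : SkewBlock) → Matrix (Fin (blockSize b)) (Fin (blockSize b)) ℂ
  | .H h _ => fun i j =>
      if i.1 < h ∧ j.1 = h + i.1 then 1
      else if j.1 < h ∧ i.1 = h + j.1 then -1 else 0
  | .K k => fun i j =>
      if i.1 < k ∧ j.1 = k + i.1 + 1 then 1
      else if j.1 < k ∧ i.1 = k + j.1 + 1 then -1 else 0
  | .M k => MA k

/-- Constant coefficient of a canonical skew-symmetric block (the block pencil is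
`λ • blockA b − blockB b`). -/
def blockB : (b : SkewBlock) → Matrix (Fin (blockSize b)) (Fin (blockSize b)) ℂ
  | .H h μ => fun i j =>
      if i.1 < h ∧ j.1 = h + i.1 then μ
      else if i.1 < h ∧ j.1 = h + i.1 + 1 then 1
      else if j.1 < h ∧ i.1 = h + j.1 then -μ
      else if j.1 < h ∧ i.1 = h + j.1 + 1 then -1 else 0
  | .K k => fun i j =>
      if i.1 < k ∧ j.1 = k + i.1 then 1
      else if j.1 < k ∧ i.1 = k + j.1 then -1 else 0
  | .M k => MB k

/-- λ-coefficient of the Kronecker regular block `E_k(μ)`, where `μ : Option ℂ`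
(`some c` is a finite eigenvalue `c`, `none` is the eigenvalue `∞`):
`E_k(c) = λI_k − J_k(c)` and `E_k(∞) = λJ_k(0) − I_k`. -/
def EA (k : ℕ) : Option ℂ → Matrix (Fin k) (Fin k) ℂ
  | some _ => 1
  | none => Jord k 0

/-- Constant coefficient of `E_k(μ)` (the block pencil is `λ • EA k μ − EB k μ`). -/
def EB (k : ℕ) : Option ℂ → Matrix (Fin k) (Fin k) ℂ
  | some c => Jord k c
  | none => 1

end

/- ========================================================================
   Auxiliary development
   ======================================================================== -/

noncomputable section

namespace SkewAux



/-- unified coefficient matrix: `d = 0` gives `MA`, `d = 1` gives `MB`. -/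
def Cmat (k d : ℕ) : Matrix (Fin (2*k+1)) (Fin (2*k+1)) ℂ := fun i j =>
  if i.1 < k ∧ j.1 = k + i.1 + d then 1
  else if j.1 < k ∧ i.1 = k + j.1 + d then -1 else 0


lemma Cmat_eq_one {κ d : ℕ} {i j : Fin (2*κ+1)} (h1 : (i:ℕ) < κ) (h2 : (j:ℕ) = κ + (i:ℕ) + d) :
    Cmat κ d i j = 1 := by
  simp only [Cmat]; rw [if_pos ⟨h1, h2⟩]

lemma Cmat_eq_negone {κ d : ℕ} {i j : Fin (2*κ+1)} (h1 : (j:ℕ) < κ) (h2 : (i:ℕ) = κ + (j:ℕ) + d) :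
    Cmat κ d i j = -1 := by
  simp only [Cmat]; rw [if_neg (by omega), if_pos ⟨h1, h2⟩]

lemma Cmat_eq_zero {κ d : ℕ} {i j : Fin (2*κ+1)}
    (h1 : ¬((i:ℕ) < κ ∧ (j:ℕ) = κ + (i:ℕ) + d)) (h2 : ¬((j:ℕ) < κ ∧ (i:ℕ) = κ + (j:ℕ) + d)) :
    Cmat κ d i j = 0 := by
  simp only [Cmat]; rw [if_neg h1, if_neg h2]

variable {t : ℕ} (k : Fin t → ℕ)

abbrev SIdx (t : ℕ) (k : Fin t → ℕ) := (g : Fin t) × Fin (2 * k g + 1)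

def Cbig (d : ℕ) : Matrix (SIdx t k) (SIdx t k) ℂ :=
  blockDiagonal' fun g => Cmat (k g) d

/-- totalized entry access -/
def XN (X : Matrix (SIdx t k) (SIdx t k) ℂ) (g h : Fin t) (i j : ℕ) : ℂ :=
  if hi : i < 2 * k g + 1 then
    if hj : j < 2 * k h + 1 then X ⟨g, ⟨i, hi⟩⟩ ⟨h, ⟨j, hj⟩⟩ else 0
  else 0

lemma XN_eq (X : Matrix (SIdx t k) (SIdx t k) ℂ) (g h : Fin t) {i j : ℕ}
    (hi : i < 2 * k g + 1) (hj : j < 2 * k h + 1) :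
    XN k X g h i j = X ⟨g, ⟨i, hi⟩⟩ ⟨h, ⟨j, hj⟩⟩ := by
  simp [XN, hi, hj]

lemma sumC_left {κ : ℕ} (d : ℕ) (hd : d ≤ 1) (f : Fin (2*κ+1) → ℂ) (j : Fin (2*κ+1)) :
    ∑ x, f x * Cmat κ d x j =
      (if h : κ + d ≤ (j:ℕ) ∧ (j:ℕ) < 2*κ + d then f ⟨(j:ℕ) - (κ + d), by omega⟩ else 0)
      - (if h : (j:ℕ) < κ then f ⟨κ + (j:ℕ) + d, by omega⟩ else 0) := by
  by_cases h1 : κ + d ≤ (j:ℕ) ∧ (j:ℕ) < 2*κ + d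
  · rw [dif_pos h1, dif_neg (by omega), sub_zero,
      Finset.sum_eq_single (⟨(j:ℕ) - (κ + d), by omega⟩ : Fin (2*κ+1))]
    · rw [Cmat_eq_one (by simp only [Fin.val_mk]; omega) (by simp only [Fin.val_mk]; omega)]
      ring
    · intro b _ hb
      rw [Cmat_eq_zero]
      · ring
      · rintro ⟨h2, h3⟩
        exact hb (by apply Fin.ext; simp only [Fin.val_mk]; omega)
      · rintro ⟨h2, h3⟩; omega
    · intro h; exact absurd (Finset.mem_univ _) h
  · rw [dif_neg h1]
    by_cases h2 : (j:ℕ) < κ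
    · rw [dif_pos h2, zero_sub, Finset.sum_eq_single (⟨κ + (j:ℕ) + d, by omega⟩ : Fin (2*κ+1))]
      · rw [Cmat_eq_negone h2 (by simp only [Fin.val_mk])]
        ring
      · intro b _ hb
        rw [Cmat_eq_zero]
        · ring
        · rintro ⟨h3, h4⟩; omega
        · rintro ⟨h3, h4⟩
          exact hb (by apply Fin.ext; simp only [Fin.val_mk]; omega)
      · intro h; exact absurd (Finset.mem_univ _) h
    · rw [dif_neg h2, sub_zero]
      apply Finset.sum_eq_zero
      intro b _
      rw [Cmat_eq_zero (by rintro ⟨h3, h4⟩; omega) (by rintro ⟨h3, h4⟩; omega)]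
      ring

lemma sumC_right {κ : ℕ} (d : ℕ) (hd : d ≤ 1) (f : Fin (2*κ+1) → ℂ) (i : Fin (2*κ+1)) :
    ∑ x, Cmat κ d i x * f x =
      (if h : (i:ℕ) < κ then f ⟨κ + (i:ℕ) + d, by omega⟩ else 0)
      - (if h : κ + d ≤ (i:ℕ) ∧ (i:ℕ) < 2*κ + d then f ⟨(i:ℕ) - (κ + d), by omega⟩ else 0) := by
  by_cases h1 : (i:ℕ) < κ
  · rw [dif_pos h1, dif_neg (by omega), sub_zero,
      Finset.sum_eq_single (⟨κ + (i:ℕ) + d, by omega⟩ : Fin (2*κ+1))]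
    · rw [Cmat_eq_one h1 (by simp only [Fin.val_mk])]
      ring
    · intro b _ hb
      rw [Cmat_eq_zero]
      · ring
      · rintro ⟨h2, h3⟩
        exact hb (by apply Fin.ext; simp only [Fin.val_mk]; omega)
      · rintro ⟨h2, h3⟩; omega
    · intro h; exact absurd (Finset.mem_univ _) h
  · rw [dif_neg h1]
    by_cases h2 : κ + d ≤ (i:ℕ) ∧ (i:ℕ) < 2*κ + d
    · rw [dif_pos h2, zero_sub, Finset.sum_eq_single (⟨(i:ℕ) - (κ + d), by omega⟩ : Fin (2*κ+1))]
      · rw [Cmat_eq_negone (by simp only [Fin.val_mk]; omega) (by simp only [Fin.val_mk]; omega)]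
        ring
      · intro b _ hb
        rw [Cmat_eq_zero]
        · ring
        · rintro ⟨h3, h4⟩; omega
        · rintro ⟨h3, h4⟩
          exact hb (by apply Fin.ext; simp only [Fin.val_mk]; omega)
      · intro h; exact absurd (Finset.mem_univ _) h
    · rw [dif_neg h2, sub_zero]
      apply Finset.sum_eq_zero
      intro b _
      rw [Cmat_eq_zero (by rintro ⟨h3, h4⟩; omega) (by rintro ⟨h3, h4⟩; omega)]
      ring

lemma mulC_left (d : ℕ) (hd : d ≤ 1) (X : Matrix (SIdx t k) (SIdx t k) ℂ) (g h : Fin t)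
    (i : Fin (2 * k g + 1)) (j : Fin (2 * k h + 1)) :
    (Xᵀ * Cbig k d) ⟨g, i⟩ ⟨h, j⟩ =
      (if k h + d ≤ (j:ℕ) ∧ (j:ℕ) < 2 * k h + d then XN k X h g ((j:ℕ) - (k h + d)) (i:ℕ) else 0)
      - (if (j:ℕ) < k h then XN k X h g (k h + (j:ℕ) + d) (i:ℕ) else 0) := by
  rw [mul_apply, ← Finset.univ_sigma_univ, Finset.sum_sigma,
    Finset.sum_eq_single h
      (fun b _ hb => Finset.sum_eq_zero fun x _ => by
        rw [show Cbig k d ⟨b,x⟩ ⟨h,j⟩ = 0 from blockDiagonal'_apply_ne _ _ _ hb, mul_zero])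
      (fun hh => absurd (Finset.mem_univ h) hh)]
  calc ∑ x, Xᵀ ⟨g,i⟩ ⟨h,x⟩ * Cbig k d ⟨h,x⟩ ⟨h,j⟩
      = ∑ x, X ⟨h,x⟩ ⟨g,i⟩ * Cmat (k h) d x j := by
        refine Finset.sum_congr rfl fun x _ => ?_
        rw [transpose_apply, show Cbig k d ⟨h,x⟩ ⟨h,j⟩ = Cmat (k h) d x j from
          blockDiagonal'_apply_eq _ _ _ _]
    _ = _ := by
        rw [sumC_left d hd]
        congr 1
        · by_cases hc : k h + d ≤ (j:ℕ) ∧ (j:ℕ) < 2 * k h + d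
          · rw [dif_pos hc, if_pos hc, XN_eq k X h g (by omega) (by omega)]
          · rw [dif_neg hc, if_neg hc]
        · by_cases hc : (j:ℕ) < k h
          · rw [dif_pos hc, if_pos hc, XN_eq k X h g (by omega) (by omega)]
          · rw [dif_neg hc, if_neg hc]

lemma mulC_right (d : ℕ) (hd : d ≤ 1) (X : Matrix (SIdx t k) (SIdx t k) ℂ) (g h : Fin t)
    (i : Fin (2 * k g + 1)) (j : Fin (2 * k h + 1)) :
    (Cbig k d * X) ⟨g, i⟩ ⟨h, j⟩ =
      (if (i:ℕ) < k g then XN k X g h (k g + (i:ℕ) + d) (j:ℕ) else 0)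
      - (if k g + d ≤ (i:ℕ) ∧ (i:ℕ) < 2 * k g + d then XN k X g h ((i:ℕ) - (k g + d)) (j:ℕ) else 0) := by
  rw [mul_apply, ← Finset.univ_sigma_univ, Finset.sum_sigma,
    Finset.sum_eq_single g
      (fun b _ hb => Finset.sum_eq_zero fun x _ => by
        rw [show Cbig k d ⟨g,i⟩ ⟨b,x⟩ = 0 from blockDiagonal'_apply_ne _ _ _ hb.symm, zero_mul])
      (fun hh => absurd (Finset.mem_univ g) hh)]
  calc ∑ x, Cbig k d ⟨g,i⟩ ⟨g,x⟩ * X ⟨g,x⟩ ⟨h,j⟩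
      = ∑ x, Cmat (k g) d i x * X ⟨g,x⟩ ⟨h,j⟩ := by
        refine Finset.sum_congr rfl fun x _ => ?_
        rw [show Cbig k d ⟨g,i⟩ ⟨g,x⟩ = Cmat (k g) d i x from blockDiagonal'_apply_eq _ _ _ _]
    _ = _ := by
        rw [sumC_right d hd]
        congr 1
        · by_cases hc : (i:ℕ) < k g
          · rw [dif_pos hc, if_pos hc, XN_eq k X g h (by omega) (by omega)]
          · rw [dif_neg hc, if_neg hc]
        · by_cases hc : k g + d ≤ (i:ℕ) ∧ (i:ℕ) < 2 * k g + d
          · rw [dif_pos hc, if_pos hc, XN_eq k X g h (by omega) (by omega)]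
          · rw [dif_neg hc, if_neg hc]

def isSol (X : Matrix (SIdx t k) (SIdx t k) ℂ) : Prop :=
  ∀ d ≤ 1, Xᵀ * Cbig k d + Cbig k d * X = 0

lemma sol_rel {X : Matrix (SIdx t k) (SIdx t k) ℂ} (hX : isSol k X) {d : ℕ} (hd : d ≤ 1)
    (g h : Fin t) {i j : ℕ} (hi : i < 2 * k g + 1) (hj : j < 2 * k h + 1) :
    ((if k h + d ≤ j ∧ j < 2 * k h + d then XN k X h g (j - (k h + d)) i else 0)
      - (if j < k h then XN k X h g (k h + j + d) i else 0))
    + ((if i < k g then XN k X g h (k g + i + d) j else 0)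
      - (if k g + d ≤ i ∧ i < 2 * k g + d then XN k X g h (i - (k g + d)) j else 0)) = 0 := by
  have h1 := mulC_left k d hd X g h ⟨i, hi⟩ ⟨j, hj⟩
  have h2 := mulC_right k d hd X g h ⟨i, hi⟩ ⟨j, hj⟩
  have h3 : (Xᵀ * Cbig k d + Cbig k d * X) ⟨g, ⟨i, hi⟩⟩ ⟨h, ⟨j, hj⟩⟩ = 0 := by
    rw [hX d hd]; rfl
  rw [Matrix.add_apply, h1, h2] at h3
  simpa using h3
variable {X : Matrix (SIdx t k) (SIdx t k) ℂ}

/-- top-top relation -/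
lemma relTT (hX : isSol k X) (d : ℕ) (hd : d ≤ 1) {g h : Fin t} {i j : ℕ}
    (hi : i < k g) (hj : j < k h) :
    XN k X g h (k g + i + d) j = XN k X h g (k h + j + d) i := by
  have h0 := sol_rel k hX hd g h (i := i) (j := j) (by omega) (by omega)
  rw [if_neg (by omega), if_pos hj, if_pos hi, if_neg (by omega)] at h0
  linear_combination h0

/-- top-bottom relation: `i < k g`, column `k h + y`. -/
lemma relTB (hX : isSol k X) (d : ℕ) (hd : d ≤ 1) {g h : Fin t} {i y : ℕ}
    (hi : i < k g) (hy : y ≤ k h) :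
    (if d ≤ y ∧ y < k h + d then XN k X h g (y - d) i else 0)
      + XN k X g h (k g + i + d) (k h + y) = 0 := by
  have h0 := sol_rel k hX hd g h (i := i) (j := k h + y) (by omega) (by omega)
  by_cases hc : d ≤ y ∧ y < k h + d
  · rw [if_pos (show k h + d ≤ k h + y ∧ k h + y < 2 * k h + d by omega),
      show k h + y - (k h + d) = y - d by omega, if_neg (by omega), if_pos hi,
      if_neg (by omega)] at h0
    rw [if_pos hc]
    linear_combination h0
  · rw [if_neg (show ¬(k h + d ≤ k h + y ∧ k h + y < 2 * k h + d) by omega),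
      if_neg (by omega), if_pos hi, if_neg (by omega)] at h0
    rw [if_neg hc]
    linear_combination h0

/-- bottom-bottom relation: row `k g + x`, column `k h + y`. -/
lemma relBB (hX : isSol k X) (d : ℕ) (hd : d ≤ 1) {g h : Fin t} {x y : ℕ}
    (hx : x ≤ k g) (hy : y ≤ k h) :
    (if d ≤ y ∧ y < k h + d then XN k X h g (y - d) (k g + x) else 0)
      = (if d ≤ x ∧ x < k g + d then XN k X g h (x - d) (k h + y) else 0) := by
  have h0 := sol_rel k hX hd g h (i := k g + x) (j := k h + y) (by omega) (by omega)
  by_cases hc1 : d ≤ y ∧ y < k h + d <;> by_cases hc2 : d ≤ x ∧ x < k g + d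
  · rw [if_pos (show k h + d ≤ k h + y ∧ k h + y < 2 * k h + d by omega),
      show k h + y - (k h + d) = y - d by omega, if_neg (by omega), if_neg (by omega),
      if_pos (show k g + d ≤ k g + x ∧ k g + x < 2 * k g + d by omega),
      show k g + x - (k g + d) = x - d by omega] at h0
    rw [if_pos hc1, if_pos hc2]
    linear_combination h0
  · rw [if_pos (show k h + d ≤ k h + y ∧ k h + y < 2 * k h + d by omega),
      show k h + y - (k h + d) = y - d by omega, if_neg (by omega), if_neg (by omega),
      if_neg (show ¬(k g + d ≤ k g + x ∧ k g + x < 2 * k g + d) by omega)] at h0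
    rw [if_pos hc1, if_neg hc2]
    linear_combination h0
  · rw [if_neg (show ¬(k h + d ≤ k h + y ∧ k h + y < 2 * k h + d) by omega),
      if_neg (by omega), if_neg (by omega),
      if_pos (show k g + d ≤ k g + x ∧ k g + x < 2 * k g + d by omega),
      show k g + x - (k g + d) = x - d by omega] at h0
    rw [if_neg hc1, if_pos hc2]
    linear_combination h0
  · rw [if_neg (show ¬(k h + d ≤ k h + y ∧ k h + y < 2 * k h + d) by omega),
      if_neg (by omega), if_neg (by omega),
      if_neg (show ¬(k g + d ≤ k g + x ∧ k g + x < 2 * k g + d) by omega)] at h0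
    rw [if_neg hc1, if_neg hc2]

/- ============ X12 block vanishes ============ -/
lemma K12aux (hX : isSol k X) {g h : Fin t} {y : ℕ} (hy : y < k h) :
    XN k X h g y (k g + k g) = 0 := by
  have h0 := relBB k hX 0 (by omega) (g := g) (h := h) (x := k g) (y := y) le_rfl (le_of_lt hy)
  rw [if_pos (by omega), if_neg (by omega), Nat.sub_zero] at h0
  exact h0

lemma K12 (hX : isSol k X) : ∀ y (g h : Fin t) (x : ℕ), x < k g → y ≤ k h →
    XN k X g h x (k h + y) = 0 := by
  intro y
  induction y with
  | zero =>
    intro g h x hx _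
    have h0 := relBB k hX 1 le_rfl (g := g) (h := h) (x := x + 1) (y := 0) (by omega) (by omega)
    rw [if_neg (by omega), if_pos (by omega), show x + 1 - 1 = x by omega] at h0
    exact h0.symm
  | succ y ih =>
    intro g h x hx hy
    have e1 := relBB k hX 1 le_rfl (g := g) (h := h) (x := x + 1) (y := y + 1) (by omega) hy
    rw [if_pos (by omega), if_pos (by omega), show y + 1 - 1 = y by omega,
      show x + 1 - 1 = x by omega] at e1
    -- e1 : XN h g y (k g + (x+1)) = XN g h x (k h + (y+1))
    by_cases hx1 : x + 1 < k g
    · have e2 := relBB k hX 0 (by omega) (g := g) (h := h) (x := x + 1) (y := y) (by omega) (by omega)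
      rw [if_pos (by omega), if_pos (by omega), Nat.sub_zero, Nat.sub_zero] at e2
      rw [← e1, e2, ih g h (x + 1) hx1 (by omega)]
    · have hxe : x + 1 = k g := by omega
      rw [← e1, show k g + (x + 1) = k g + k g by omega, K12aux k hX (by omega)]

/- ============ X22 block: Toeplitz ============ -/
lemma Ustep (hX : isSol k X) {g h : Fin t} {x y : ℕ} (hx : x < k g) (hy1 : 1 ≤ y) (hy : y ≤ k h) :
    XN k X g h (k g + x + 1) (k h + y) = XN k X g h (k g + x) (k h + (y - 1)) := by
  have e1 := relTB k hX 1 le_rfl (g := g) (h := h) (i := x) (y := y) hx hy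
  rw [if_pos (by omega)] at e1
  have e2 := relTB k hX 0 (by omega) (g := g) (h := h) (i := x) (y := y - 1) hx (by omega)
  rw [if_pos (by omega), Nat.sub_zero, Nat.add_zero] at e2
  linear_combination e1 - e2

lemma Ubound0 (hX : isSol k X) {g h : Fin t} {x : ℕ} (hx : x < k g) :
    XN k X g h (k g + x + 1) (k h) = 0 := by
  have e1 := relTB k hX 1 le_rfl (g := g) (h := h) (i := x) (y := 0) hx (by omega)
  rw [if_neg (by omega)] at e1
  have : XN k X g h (k g + x + 1) (k h + 0) = 0 := by linear_combination e1
  simpa using this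

lemma UboundTop (hX : isSol k X) {g h : Fin t} {x : ℕ} (hx : x < k g) :
    XN k X g h (k g + x) (k h + k h) = 0 := by
  have e1 := relTB k hX 0 (by omega) (g := g) (h := h) (i := x) (y := k h) hx le_rfl
  rw [if_neg (by omega), Nat.add_zero] at e1
  linear_combination e1

lemma K22a (hX : isSol k X) {g h : Fin t} : ∀ x y : ℕ, x ≤ k g → y ≤ k h → x ≤ y →
    XN k X g h (k g + x) (k h + y) = XN k X g h (k g) (k h + (y - x)) := by
  intro x
  induction x with
  | zero => intro y _ _ _; simp
  | succ x ih =>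
    intro y hx hy hxy
    rw [show k g + (x + 1) = k g + x + 1 by omega, Ustep k hX (by omega) (by omega) hy,
      ih (y - 1) (by omega) (by omega) (by omega), show y - 1 - x = y - (x + 1) by omega]

lemma K22b (hX : isSol k X) {g h : Fin t} : ∀ y x : ℕ, x ≤ k g → y ≤ k h → y < x →
    XN k X g h (k g + x) (k h + y) = 0 := by
  intro y
  induction y with
  | zero =>
    intro x hx _ hlt
    have := Ubound0 k hX (g := g) (h := h) (x := x - 1) (by omega)
    rw [show k g + (x - 1) + 1 = k g + x by omega] at this
    simpa using this
  | succ y ih =>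
    intro x hx hy hlt
    have := Ustep k hX (g := g) (h := h) (x := x - 1) (y := y + 1) (by omega) (by omega) hy
    rw [show k g + (x - 1) + 1 = k g + x by omega, show y + 1 - 1 = y by omega] at this
    rw [this, ih (x - 1) (by omega) (by omega) (by omega)]

lemma K22c (hX : isSol k X) {g h : Fin t} {x y : ℕ} (hx : x ≤ k g) (hy : y ≤ k h)
    (hxy : x ≤ y) (hbig : ¬(y - x < k h + 1 - k g)) :
    XN k X g h (k g + x) (k h + y) = 0 := by
  have hd : y - x ≤ k h := by omega
  have hc : k h - (y - x) < k g := by omega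
  rw [K22a k hX x y hx hy hxy]
  have e1 := K22a k hX (g := g) (h := h) (k h - (y - x)) (k h) (by omega) le_rfl (by omega)
  rw [show k h - (k h - (y - x)) = y - x by omega] at e1
  rw [← e1, UboundTop k hX hc]

/-- combined X22 description -/
lemma K22full (hX : isSol k X) {g h : Fin t} {x y : ℕ} (hx : x ≤ k g) (hy : y ≤ k h) :
    XN k X g h (k g + x) (k h + y) =
      if x ≤ y ∧ y - x < k h + 1 - k g then XN k X g h (k g) (k h + (y - x)) else 0 := by
  by_cases hc : x ≤ y ∧ y - x < k h + 1 - k g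
  · rw [if_pos hc, K22a k hX x y hx hy hc.1]
  · rw [if_neg hc]
    by_cases hxy : x ≤ y
    · exact K22c k hX hx hy hxy (by tauto)
    · exact K22b k hX y x hx hy (by omega)

/- ============ X21 block: Hankel + symmetry ============ -/
/-- canonical anti-diagonal value -/
def phic (X : Matrix (SIdx t k) (SIdx t k) ℂ) (g h : Fin t) (m : ℕ) : ℂ :=
  if m < k h then XN k X g h (k g) m else XN k X h g (2 * k h) (m - k h)

lemma K21a (hX : isSol k X) {g h : Fin t} : ∀ x : ℕ, ∀ j : ℕ, x ≤ k g → j < k h →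
    XN k X g h (k g + x) j = phic k X g h (x + j) := by
  intro x
  induction x with
  | zero =>
    intro j _ hj
    rw [phic, if_pos (by omega)]
    simp
  | succ x ih =>
    intro j hx hj
    by_cases hj1 : j + 1 < k h
    · have s1 := relTT k hX 1 le_rfl (g := g) (h := h) (i := x) (j := j) (by omega) hj
      have s2 := relTT k hX 0 (by omega) (g := h) (h := g) (i := j + 1) (j := x) hj1 (by omega)
      have s2' : XN k X h g (k h + j + 1) x = XN k X g h (k g + x) (j + 1) := by
        rw [show k h + j + 1 = k h + (j + 1) + 0 by omega,
          show k g + x = k g + x + 0 by omega]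
        exact s2
      calc XN k X g h (k g + (x + 1)) j
          = XN k X h g (k h + j + 1) x := by
            rw [show k g + (x + 1) = k g + x + 1 by omega]; exact s1
        _ = XN k X g h (k g + x) (j + 1) := s2'
        _ = phic k X g h (x + (j + 1)) := ih (j + 1) (by omega) hj1
        _ = phic k X g h (x + 1 + j) := by rw [show x + (j + 1) = x + 1 + j by omega]
    · have s1 := relTT k hX 1 le_rfl (g := g) (h := h) (i := x) (j := j) (by omega) hj
      calc XN k X g h (k g + (x + 1)) j
          = XN k X h g (k h + j + 1) x := by
            rw [show k g + (x + 1) = k g + x + 1 by omega]; exact s1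
        _ = phic k X g h (x + 1 + j) := by
            rw [phic, if_neg (by omega), show k h + j + 1 = 2 * k h by omega,
              show x + 1 + j - k h = x by omega]

lemma K21b (hX : isSol k X) {g h : Fin t} {m : ℕ} (hm : m < k g + k h) :
    phic k X g h m = phic k X h g m := by
  by_cases hmh : m < k h
  · rcases Nat.eq_zero_or_pos (k g) with hkg | hkg
    · rw [phic, phic, if_pos hmh, if_neg (by omega), show 2 * k g = k g by omega,
        show m - k g = m by omega]
    · have s1 := relTT k hX 0 (by omega) (g := g) (h := h) (i := 0) (j := m) hkg hmh
      have s2 := K21a k hX (g := h) (h := g) m 0 (by omega) hkg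
      calc phic k X g h m = XN k X g h (k g) m := by rw [phic, if_pos hmh]
        _ = XN k X h g (k h + m) 0 := by
            rw [show k g = k g + 0 + 0 by omega, show k h + m = k h + m + 0 by omega]
            exact s1
        _ = phic k X h g (m + 0) := s2
        _ = phic k X h g m := by rw [Nat.add_zero]
  · rw [phic, if_neg hmh]
    have s2 := K21a k hX (g := h) (h := g) (k h) (m - k h) le_rfl (by omega)
    rw [show k h + k h = 2 * k h by omega] at s2
    rw [s2, show k h + (m - k h) = m by omega]
/-- parameter space -/
abbrev PSpace (t : ℕ) (k : Fin t → ℕ) : Type :=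
  ((g : Fin t) → (h : Fin t) → (Fin (k h + 1 - k g) → ℂ)) ×
  ((g : Fin t) → (h : Fin t) → (Fin (if g < h then k g + k h else 0) → ℂ)) ×
  ((g : Fin t) → Fin (2 * k g) → ℂ)

def pEnt (v : PSpace t k) (g h : Fin t) (c : ℕ) : ℂ :=
  if hc : c < k h + 1 - k g then v.1 g h ⟨c, hc⟩ else 0

lemma pEnt_zero (v : PSpace t k) (g h : Fin t) {c : ℕ} (hc : ¬ c < k h + 1 - k g) :
    pEnt k v g h c = 0 := dif_neg hc

def phiP (v : PSpace t k) (g h : Fin t) (m : ℕ) : ℂ :=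
  if hgh : g < h then
    (if hm : m < k g + k h then v.2.1 g h ⟨m, by rw [if_pos hgh]; exact hm⟩ else 0)
  else if hhg : h < g then
    (if hm : m < k h + k g then v.2.1 h g ⟨m, by rw [if_pos hhg]; exact hm⟩ else 0)
  else (if hm : m < 2 * k g then v.2.2 g ⟨m, hm⟩ else 0)

lemma phiP_symm (v : PSpace t k) (g h : Fin t) (m : ℕ) :
    phiP k v g h m = phiP k v h g m := by
  rcases lt_trichotomy g h with hlt | heq | hgt
  · rw [phiP, phiP, dif_pos hlt, dif_neg (lt_asymm hlt), dif_pos hlt]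
  · subst heq; rfl
  · rw [phiP, phiP, dif_neg (lt_asymm hgt), dif_pos hgt, dif_pos hgt]

def ent (v : PSpace t k) (g h : Fin t) (i j : ℕ) : ℂ :=
  if i < k g then
    (if j < k h then (if j ≤ i then -pEnt k v h g (i - j) else 0) else 0)
  else if j < k h then phiP k v g h ((i - k g) + j)
  else if i - k g ≤ j - k h then pEnt k v g h ((j - k h) - (i - k g)) else 0

lemma ent_TT (v : PSpace t k) {g h : Fin t} {i j : ℕ} (h1 : i < k g) (h2 : j < k h) :
    ent k v g h i j = if j ≤ i then -pEnt k v h g (i - j) else 0 := by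
  rw [ent, if_pos h1, if_pos h2]

lemma ent_TB (v : PSpace t k) {g h : Fin t} {i j : ℕ} (h1 : i < k g) (h2 : ¬ j < k h) :
    ent k v g h i j = 0 := by
  rw [ent, if_pos h1, if_neg h2]

lemma ent_BT (v : PSpace t k) {g h : Fin t} {i j : ℕ} (h1 : ¬ i < k g) (h2 : j < k h) :
    ent k v g h i j = phiP k v g h ((i - k g) + j) := by
  rw [ent, if_neg h1, if_pos h2]

lemma ent_BB (v : PSpace t k) {g h : Fin t} {i j : ℕ} (h1 : ¬ i < k g) (h2 : ¬ j < k h) :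
    ent k v g h i j =
      if i - k g ≤ j - k h then pEnt k v g h ((j - k h) - (i - k g)) else 0 := by
  rw [ent, if_neg h1, if_neg h2]

lemma pEnt_add (u v : PSpace t k) (g h : Fin t) (c : ℕ) :
    pEnt k (u + v) g h c = pEnt k u g h c + pEnt k v g h c := by
  unfold pEnt; split_ifs <;> simp

lemma phiP_add (u v : PSpace t k) (g h : Fin t) (m : ℕ) :
    phiP k (u + v) g h m = phiP k u g h m + phiP k v g h m := by
  unfold phiP; split_ifs <;> simp

lemma ent_add (u v : PSpace t k) (g h : Fin t) (i j : ℕ) :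
    ent k (u + v) g h i j = ent k u g h i j + ent k v g h i j := by
  unfold ent; split_ifs <;> simp [pEnt_add, phiP_add] <;> ring

lemma pEnt_smul (c : ℂ) (v : PSpace t k) (g h : Fin t) (x : ℕ) :
    pEnt k (c • v) g h x = c * pEnt k v g h x := by
  unfold pEnt; split_ifs <;> simp

lemma phiP_smul (c : ℂ) (v : PSpace t k) (g h : Fin t) (m : ℕ) :
    phiP k (c • v) g h m = c * phiP k v g h m := by
  unfold phiP; split_ifs <;> simp

lemma ent_smul (c : ℂ) (v : PSpace t k) (g h : Fin t) (i j : ℕ) :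
    ent k (c • v) g h i j = c * ent k v g h i j := by
  unfold ent; split_ifs <;> simp [pEnt_smul, phiP_smul] <;> ring

def Phi : PSpace t k →ₗ[ℂ] Matrix (SIdx t k) (SIdx t k) ℂ where
  toFun v := Matrix.of fun p q => ent k v p.1 q.1 p.2.1 q.2.1
  map_add' u v := by
    funext p q
    exact ent_add k u v p.1 q.1 p.2.1 q.2.1
  map_smul' c v := by
    funext p q
    exact ent_smul k c v p.1 q.1 p.2.1 q.2.1



lemma XN_add (X Y : Matrix (SIdx t k) (SIdx t k) ℂ) (g h : Fin t) (i j : ℕ) :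
    XN k (X + Y) g h i j = XN k X g h i j + XN k Y g h i j := by
  unfold XN; split_ifs <;> simp [Matrix.add_apply]

lemma XN_smul (c : ℂ) (X : Matrix (SIdx t k) (SIdx t k) ℂ) (g h : Fin t) (i j : ℕ) :
    XN k (c • X) g h i j = c * XN k X g h i j := by
  unfold XN; split_ifs <;> simp [Matrix.smul_apply]

lemma phic_add (X Y : Matrix (SIdx t k) (SIdx t k) ℂ) (g h : Fin t) (m : ℕ) :
    phic k (X + Y) g h m = phic k X g h m + phic k Y g h m := by
  unfold phic; split_ifs <;> apply XN_add

lemma phic_smul (c : ℂ) (X : Matrix (SIdx t k) (SIdx t k) ℂ) (g h : Fin t) (m : ℕ) :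
    phic k (c • X) g h m = c * phic k X g h m := by
  unfold phic; split_ifs <;> apply XN_smul

lemma phic_def (X : Matrix (SIdx t k) (SIdx t k) ℂ) (g h : Fin t) (m : ℕ) :
    phic k X g h m
      = if m < k h then XN k X g h (k g) m else XN k X h g (2 * k h) (m - k h) := rfl

lemma pEnt_def (v : PSpace t k) (g h : Fin t) (c : ℕ) :
    pEnt k v g h c = if hc : c < k h + 1 - k g then v.1 g h ⟨c, hc⟩ else 0 := rfl

lemma phiP_def (v : PSpace t k) (g h : Fin t) (m : ℕ) :
    phiP k v g h m = if hgh : g < h then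
      (if hm : m < k g + k h then v.2.1 g h ⟨m, by rw [if_pos hgh]; exact hm⟩ else 0)
    else if hhg : h < g then
      (if hm : m < k h + k g then v.2.1 h g ⟨m, by rw [if_pos hhg]; exact hm⟩ else 0)
    else (if hm : m < 2 * k g then v.2.2 g ⟨m, hm⟩ else 0) := rfl

lemma Phi_apply (v : PSpace t k) (p q : SIdx t k) :
    Phi k v p q = ent k v p.1 q.1 p.2.1 q.2.1 := rfl

lemma XN_Phi (v : PSpace t k) (g h : Fin t) (i j : ℕ)
    (hi : i < 2 * k g + 1) (hj : j < 2 * k h + 1) :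
    XN k (Phi k v) g h i j = ent k v g h i j := by
  rw [XN_eq k _ g h hi hj, Phi_apply]

lemma Phi_isSol (v : PSpace t k) : isSol k (Phi k v) := by
  intro d hd
  funext p q
  obtain ⟨g, i⟩ := p
  obtain ⟨h, j⟩ := q
  rw [Matrix.add_apply, mulC_left k d hd _ g h i j, mulC_right k d hd _ g h i j]
  show _ = (0 : Matrix (SIdx t k) (SIdx t k) ℂ) ⟨g,i⟩ ⟨h,j⟩
  rw [Matrix.zero_apply]
  by_cases hI : (i:ℕ) < k g <;> by_cases hJ : (j:ℕ) < k h
  · -- TT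
    rw [if_neg (by omega), if_pos hJ, if_pos hI, if_neg (by omega),
      XN_Phi k v h g (k h + (j:ℕ) + d) (i:ℕ) (by omega) (by omega),
      XN_Phi k v g h (k g + (i:ℕ) + d) (j:ℕ) (by omega) (by omega),
      ent_BT k v (by omega) hI, ent_BT k v (by omega) hJ,
      show k h + (j:ℕ) + d - k h + (i:ℕ) = (i:ℕ) + d + (j:ℕ) by omega,
      show k g + (i:ℕ) + d - k g + (j:ℕ) = (i:ℕ) + d + (j:ℕ) by omega,
      phiP_symm k v h g]
    ring
  · -- TB
    rw [if_neg hJ, if_pos hI,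
      if_neg (show ¬(k g + d ≤ (i:ℕ) ∧ (i:ℕ) < 2 * k g + d) by omega),
      XN_Phi k v g h (k g + (i:ℕ) + d) (j:ℕ) (by omega) (by omega),
      ent_BB k v (by omega) hJ,
      show k g + (i:ℕ) + d - k g = (i:ℕ) + d by omega]
    by_cases hc : k h + d ≤ (j:ℕ) ∧ (j:ℕ) < 2 * k h + d
    · rw [if_pos hc, XN_Phi k v h g ((j:ℕ) - (k h + d)) (i:ℕ) (by omega) (by omega),
        ent_TT k v (by omega) hI]
      by_cases hle : (i:ℕ) + d ≤ (j:ℕ) - k h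
      · rw [if_pos (by omega), if_pos hle,
          show (j:ℕ) - (k h + d) - (i:ℕ) = (j:ℕ) - k h - ((i:ℕ) + d) by omega]
        ring
      · rw [if_neg (by omega), if_neg hle]; ring
    · rw [if_neg hc]
      by_cases hle : (i:ℕ) + d ≤ (j:ℕ) - k h
      · rw [if_pos hle, pEnt_zero k v g h (by omega)]; ring
      · rw [if_neg hle]; ring
  · -- BT
    rw [if_neg (by omega), if_pos hJ, if_neg hI,
      XN_Phi k v h g (k h + (j:ℕ) + d) (i:ℕ) (by omega) (by omega),
      ent_BB k v (by omega) hI,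
      show k h + (j:ℕ) + d - k h = (j:ℕ) + d by omega]
    by_cases hc : k g + d ≤ (i:ℕ) ∧ (i:ℕ) < 2 * k g + d
    · rw [if_pos hc, XN_Phi k v g h ((i:ℕ) - (k g + d)) (j:ℕ) (by omega) (by omega),
        ent_TT k v (by omega) hJ]
      by_cases hle : (j:ℕ) + d ≤ (i:ℕ) - k g
      · rw [if_pos hle, if_pos (by omega),
          show (i:ℕ) - (k g + d) - (j:ℕ) = (i:ℕ) - k g - ((j:ℕ) + d) by omega]
        ring
      · rw [if_neg hle, if_neg (by omega)]; ring
    · rw [if_neg hc]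
      by_cases hle : (j:ℕ) + d ≤ (i:ℕ) - k g
      · rw [if_pos hle, pEnt_zero k v h g (by omega)]; ring
      · rw [if_neg hle]; ring
  · -- BB
    rw [if_neg hI, if_neg hJ]
    by_cases hc1 : k h + d ≤ (j:ℕ) ∧ (j:ℕ) < 2 * k h + d
    · rw [if_pos hc1, XN_Phi k v h g ((j:ℕ) - (k h + d)) (i:ℕ) (by omega) (by omega),
        ent_TB k v (by omega) hI]
      by_cases hc2 : k g + d ≤ (i:ℕ) ∧ (i:ℕ) < 2 * k g + d
      · rw [if_pos hc2, XN_Phi k v g h ((i:ℕ) - (k g + d)) (j:ℕ) (by omega) (by omega),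
          ent_TB k v (by omega) hJ]
        ring
      · rw [if_neg hc2]; ring
    · rw [if_neg hc1]
      by_cases hc2 : k g + d ≤ (i:ℕ) ∧ (i:ℕ) < 2 * k g + d
      · rw [if_pos hc2, XN_Phi k v g h ((i:ℕ) - (k g + d)) (j:ℕ) (by omega) (by omega),
          ent_TB k v (by omega) hJ]
        ring
      · rw [if_neg hc2]; ring

def Psi : Matrix (SIdx t k) (SIdx t k) ℂ →ₗ[ℂ] PSpace t k where
  toFun X := ⟨fun g h c => XN k X g h (k g) (k h + c.1),
              fun g h m => phic k X g h m.1,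
              fun g m => phic k X g g m.1⟩
  map_add' X Y := by
    refine Prod.ext ?_ (Prod.ext ?_ ?_)
    · funext g h c; exact XN_add k X Y g h (k g) (k h + c.1)
    · funext g h m; exact phic_add k X Y g h m.1
    · funext g m; exact phic_add k X Y g g m.1
  map_smul' c X := by
    refine Prod.ext ?_ (Prod.ext ?_ ?_)
    · funext g h x; exact XN_smul k c X g h (k g) (k h + x.1)
    · funext g h m; exact phic_smul k c X g h m.1
    · funext g m; exact phic_smul k c X g g m.1

lemma pEnt_Psi (X : Matrix (SIdx t k) (SIdx t k) ℂ) (g h : Fin t) (c : ℕ) :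
    pEnt k (Psi k X) g h c =
      if c < k h + 1 - k g then XN k X g h (k g) (k h + c) else 0 := by
  rw [pEnt_def]
  split_ifs with hc
  · rfl
  · rfl

lemma phiP_Psi {X : Matrix (SIdx t k) (SIdx t k) ℂ} (hX : isSol k X) (g h : Fin t)
    {m : ℕ} (hm : m < k g + k h) :
    phiP k (Psi k X) g h m = phic k X g h m := by
  rw [phiP_def]
  rcases lt_trichotomy g h with hlt | heq | hgt
  · rw [dif_pos hlt, dif_pos hm]; rfl
  · subst heq
    rw [dif_neg (lt_irrefl g), dif_neg (lt_irrefl g), dif_pos (show m < 2 * k g by omega)]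
    rfl
  · rw [dif_neg (lt_asymm hgt), dif_pos hgt, dif_pos (show m < k h + k g by omega)]
    exact K21b k hX (show m < k h + k g by omega)

lemma Phi_Psi {X : Matrix (SIdx t k) (SIdx t k) ℂ} (hX : isSol k X) :
    Phi k (Psi k X) = X := by
  funext p q
  obtain ⟨g, i⟩ := p
  obtain ⟨h, j⟩ := q
  rw [Phi_apply]
  show ent k (Psi k X) g h i.1 j.1 = X ⟨g, i⟩ ⟨h, j⟩
  have hXN : XN k X g h i.1 j.1 = X ⟨g, i⟩ ⟨h, j⟩ := XN_eq k X g h i.2 j.2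
  rw [← hXN]
  by_cases hI : (i:ℕ) < k g <;> by_cases hJ : (j:ℕ) < k h
  · -- X11
    rw [ent_TT k _ hI hJ]
    have e0' := relTB k hX 0 (by omega) (g := h) (h := g) (i := (j:ℕ)) (y := (i:ℕ)) hJ (by omega)
    rw [if_pos (by omega)] at e0'
    have e0 : XN k X g h (i:ℕ) (j:ℕ) + XN k X h g (k h + (j:ℕ)) (k g + (i:ℕ)) = 0 := by
      simpa using e0'
    have e1 := K22full k hX (g := h) (h := g) (x := (j:ℕ)) (y := (i:ℕ)) (by omega) (by omega)
    rw [e1] at e0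
    by_cases hji : (j:ℕ) ≤ (i:ℕ)
    · rw [if_pos hji, pEnt_Psi]
      by_cases hlt : (i:ℕ) - (j:ℕ) < k g + 1 - k h
      · rw [if_pos hlt]
        rw [if_pos ⟨hji, hlt⟩] at e0
        linear_combination -e0
      · rw [if_neg hlt]
        rw [if_neg (by tauto)] at e0
        linear_combination -e0
    · rw [if_neg hji]
      rw [if_neg (by tauto)] at e0
      linear_combination -e0
  · -- X12
    rw [ent_TB k _ hI hJ]
    have e := K12 k hX ((j:ℕ) - k h) g h (i:ℕ) hI (by omega)
    rw [show k h + ((j:ℕ) - k h) = (j:ℕ) by omega] at e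
    exact e.symm
  · -- X21
    rw [ent_BT k _ hI hJ]
    have e := K21a k hX (g := g) (h := h) ((i:ℕ) - k g) (j:ℕ) (by omega) hJ
    rw [show k g + ((i:ℕ) - k g) = (i:ℕ) by omega] at e
    rw [e, phiP_Psi k hX g h (by omega)]
  · -- X22
    rw [ent_BB k _ hI hJ]
    have e := K22full k hX (g := g) (h := h) (x := (i:ℕ) - k g) (y := (j:ℕ) - k h) (by omega) (by omega)
    rw [show k g + ((i:ℕ) - k g) = (i:ℕ) by omega, show k h + ((j:ℕ) - k h) = (j:ℕ) by omega] at e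
    rw [e]
    by_cases hle : (i:ℕ) - k g ≤ (j:ℕ) - k h
    · rw [if_pos hle, pEnt_Psi]
      by_cases hlt : (j:ℕ) - k h - ((i:ℕ) - k g) < k h + 1 - k g
      · rw [if_pos hlt, if_pos ⟨hle, hlt⟩]
      · rw [if_neg hlt, if_neg (by tauto)]
    · rw [if_neg hle, if_neg (by tauto)]

lemma Psi_Phi (v : PSpace t k) : Psi k (Phi k v) = v := by
  have XNP : ∀ (g h : Fin t) (i j : ℕ), i < 2 * k g + 1 → j < 2 * k h + 1 →
      XN k (Phi k v) g h i j = ent k v g h i j := by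
    intro g h i j hi hj
    rw [XN_eq k _ g h hi hj, Phi_apply]
  refine Prod.ext ?_ (Prod.ext ?_ ?_)
  · funext g h c
    show XN k (Phi k v) g h (k g) (k h + c.1) = v.1 g h c
    have hc := c.2
    rw [XNP g h _ _ (by omega) (by omega), ent_BB k v (by omega) (by omega),
      if_pos (by omega), show k h + (c:ℕ) - k h - (k g - k g) = (c:ℕ) by omega,
      pEnt_def, dif_pos hc]
  · funext g h m
    show phic k (Phi k v) g h m.1 = v.2.1 g h m
    by_cases hgh : g < h
    · have hm : m.1 < k g + k h := lt_of_lt_of_eq m.2 (if_pos hgh)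
      by_cases hmh : m.1 < k h
      · rw [phic_def, if_pos hmh, XNP g h _ _ (by omega) (by omega),
          ent_BT k v (by omega) hmh, show k g - k g + m.1 = m.1 by omega,
          phiP_def, dif_pos hgh, dif_pos hm]
      · rw [phic_def, if_neg hmh, XNP h g _ _ (by omega) (by omega),
          ent_BT k v (by omega) (show m.1 - k h < k g by omega),
          show 2 * k h - k h + (m.1 - k h) = m.1 by omega,
          phiP_def, dif_neg (lt_asymm hgh), dif_pos hgh, dif_pos hm]
    · exact absurd (lt_of_lt_of_eq m.2 (if_neg hgh)) (Nat.not_lt_zero _)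
  · funext g m
    have hm := m.2
    show phic k (Phi k v) g g m.1 = v.2.2 g m
    by_cases hmh : m.1 < k g
    · rw [phic_def, if_pos hmh, XNP g g _ _ (by omega) (by omega),
        ent_BT k v (by omega) hmh, show k g - k g + m.1 = m.1 by omega,
        phiP_def, dif_neg (lt_irrefl g), dif_neg (lt_irrefl g), dif_pos hm]
    · rw [phic_def, if_neg hmh, XNP g g _ _ (by omega) (by omega),
        ent_BT k v (by omega) (show m.1 - k g < k g by omega),
        show 2 * k g - k g + (m.1 - k g) = m.1 by omega,
        phiP_def, dif_neg (lt_irrefl g), dif_neg (lt_irrefl g), dif_pos hm]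

lemma mem_ker_iff (X : Matrix (SIdx t k) (SIdx t k) ℂ) :
    X ∈ LinearMap.ker (congTangentMap (Cbig k 0) (Cbig k 1)) ↔ isSol k X := by
  rw [LinearMap.mem_ker]
  have happ : congTangentMap (Cbig k 0) (Cbig k 1) X =
      (Xᵀ * Cbig k 0 + Cbig k 0 * X, Xᵀ * Cbig k 1 + Cbig k 1 * X) := rfl
  rw [happ]
  constructor
  · intro hx d hd
    interval_cases d
    · exact congrArg Prod.fst hx
    · exact congrArg Prod.snd hx
  · intro hs
    have h0 := hs 0 (by omega)
    have h1 := hs 1 (by omega)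
    rw [Prod.mk_eq_zero]
    exact ⟨h0, h1⟩

lemma ker_eq_range :
    LinearMap.ker (congTangentMap (Cbig k 0) (Cbig k 1)) = LinearMap.range (Phi k) := by
  ext X
  rw [mem_ker_iff]
  constructor
  · intro hX; exact ⟨Psi k X, Phi_Psi k hX⟩
  · rintro ⟨v, rfl⟩; exact Phi_isSol k v

lemma finrank_ker :
    Module.finrank ℂ (LinearMap.ker (congTangentMap (Cbig k 0) (Cbig k 1))) =
      Module.finrank ℂ (PSpace t k) := by
  rw [ker_eq_range, LinearMap.finrank_range_of_inj]
  exact Function.LeftInverse.injective (g := Psi k) (fun v => Psi_Phi k v)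

lemma finrank_PSpace :
    Module.finrank ℂ (PSpace t k) =
      (∑ g : Fin t, ∑ h : Fin t, (k h + 1 - k g)) +
      ((∑ g : Fin t, ∑ h : Fin t, (if g < h then k g + k h else 0)) +
       (∑ g : Fin t, 2 * k g)) := by
  rw [Module.finrank_prod, Module.finrank_prod]
  congr 1
  · rw [Module.finrank_pi_fintype]
    refine Finset.sum_congr rfl fun g _ => ?_
    rw [Module.finrank_pi_fintype]
    refine Finset.sum_congr rfl fun h _ => ?_
    rw [Module.finrank_pi]
    simp
  congr 1
  · rw [Module.finrank_pi_fintype]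
    refine Finset.sum_congr rfl fun g _ => ?_
    rw [Module.finrank_pi_fintype]
    refine Finset.sum_congr rfl fun h _ => ?_
    rw [Module.finrank_pi]
    simp
  · rw [Module.finrank_pi_fintype]
    refine Finset.sum_congr rfl fun g _ => ?_
    rw [Module.finrank_pi]
    simp

lemma card_SIdx : Fintype.card (SIdx t k) = ∑ g : Fin t, (2 * k g + 1) := by
  rw [Fintype.card_sigma]
  simp


lemma range_conj {p q : Type*} [Fintype p] [DecidableEq p] [Fintype q] [DecidableEq q]
    (e : p ≃ q) (A B : Matrix p p ℂ) :
    Module.finrank ℂ (LinearMap.range (congTangentMap (Matrix.reindex e e A) (Matrix.reindex e e B))) =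
    Module.finrank ℂ (LinearMap.range (congTangentMap A B)) := by
  set E := Matrix.reindexLinearEquiv ℂ ℂ e e with hE
  have hEapp : ∀ M : Matrix p p ℂ, E M = reindex e e M := fun M => rfl
  have key : ∀ (X M : Matrix p p ℂ),
      (E X)ᵀ * reindex e e M + reindex e e M * (E X) = E (Xᵀ * M + M * X) := by
    intro X M
    calc (E X)ᵀ * reindex e e M + reindex e e M * (E X)
        = reindex e e (Xᵀ * M) + reindex e e (M * X) := by
          rw [hEapp, reindex_apply, reindex_apply, reindex_apply, reindex_apply,
            transpose_submatrix, submatrix_mul_equiv Xᵀ M _ e.symm _,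
            submatrix_mul_equiv M X _ e.symm _]
      _ = E (Xᵀ * M + M * X) := by rw [map_add E, hEapp, hEapp]
  have hcomp : (congTangentMap (Matrix.reindex e e A) (Matrix.reindex e e B)).comp E.toLinearMap
      = ((E.prodCongr E).toLinearMap).comp (congTangentMap A B) := by
    apply LinearMap.ext; intro X
    show congTangentMap (Matrix.reindex e e A) (Matrix.reindex e e B) (E X)
      = (E.prodCongr E) (congTangentMap A B X)
    rw [LinearEquiv.prodCongr_apply]
    show ((E X)ᵀ * reindex e e A + reindex e e A * (E X),
          (E X)ᵀ * reindex e e B + reindex e e B * (E X))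
      = (E (Xᵀ * A + A * X), E (Xᵀ * B + B * X))
    rw [key X A, key X B]
  have h2 : congTangentMap (Matrix.reindex e e A) (Matrix.reindex e e B)
      = (((E.prodCongr E).toLinearMap).comp (congTangentMap A B)).comp E.symm.toLinearMap := by
    rw [← hcomp]
    apply LinearMap.ext; intro Y
    simp only [LinearMap.comp_apply, LinearEquiv.coe_toLinearMap]
    rw [LinearEquiv.apply_symm_apply]
  rw [h2, LinearMap.range_comp, LinearEquiv.range, Submodule.map_top, LinearMap.range_comp]
  exact LinearEquiv.finrank_map_eq (E.prodCongr E) _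


end SkewAux

namespace SkewCount
open Finset

lemma sum_ite_range (T s : ℕ) (hs : s ≤ T) (c1 c2 : ℕ) :
    ∑ m ∈ range T, (if m < s then c1 else c2) = s * c1 + (T - s) * c2 := by
  rw [range_eq_Ico, ← Finset.sum_Ico_consecutive _ (Nat.zero_le s) hs]
  have h1 : ∑ m ∈ Ico 0 s, (if m < s then c1 else c2) = s * c1 := by
    rw [Finset.sum_congr rfl (fun m hm => if_pos (by simp at hm; omega))]
    simp [mul_comm]
  have h2 : ∑ m ∈ Ico s T, (if m < s then c1 else c2) = (T - s) * c2 := by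
    rw [Finset.sum_congr rfl (fun m hm => if_neg (by simp at hm; omega))]
    simp [Nat.card_Ico, mul_comm]
  rw [h1, h2]

variable (t s α : ℕ)

/-- the size function -/
def K (m : ℕ) : ℕ := if m < s then α + 1 else α

lemma count3 (hs : s ≤ t) : ∑ m ∈ range t, K s α m = t * α + s := by
  unfold K
  rw [sum_ite_range t s hs]
  have := Nat.sub_mul t s α
  have h2 : s * (α + 1) = s * α + s := by ring
  have h3 : s * α ≤ t * α := Nat.mul_le_mul_right α hs
  omega

lemma count1 (hs : s ≤ t) :
    ∑ g ∈ range t, ∑ h ∈ range t, (K s α h + 1 - K s α g) = t * t := by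
  have hin : ∀ g ∈ range t, ∑ h ∈ range t, (K s α h + 1 - K s α g)
      = if g < s then s else s + t := by
    intro g _
    by_cases hg : g < s
    · rw [if_pos hg]
      have : ∀ h ∈ range t, (K s α h + 1 - K s α g) = if h < s then 1 else 0 := by
        intro h _
        unfold K
        rw [if_pos hg]
        by_cases hh : h < s
        · rw [if_pos hh, if_pos hh]; omega
        · rw [if_neg hh, if_neg hh]; omega
      rw [Finset.sum_congr rfl this, sum_ite_range t s hs]
      omega
    · rw [if_neg hg]
      have : ∀ h ∈ range t, (K s α h + 1 - K s α g) = if h < s then 2 else 1 := by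
        intro h _
        unfold K
        rw [if_neg hg]
        by_cases hh : h < s
        · rw [if_pos hh, if_pos hh]; omega
        · rw [if_neg hh, if_neg hh]; omega
      rw [Finset.sum_congr rfl this, sum_ite_range t s hs]
      omega
  rw [Finset.sum_congr rfl hin, sum_ite_range t s hs]
  -- s * s + (t - s) * (s + t) = t * t
  obtain ⟨u, rfl⟩ : ∃ u, t = s + u := ⟨t - s, by omega⟩
  rw [show s + u - s = u by omega]
  ring

lemma count2 (hs : s ≤ t) :
    2 * (∑ g ∈ range t, ∑ h ∈ range t, (if g < h then K s α g + K s α h else 0))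
      + 2 * (t * α + s) = 2 * (t * (t * α + s)) := by
  set S := ∑ g ∈ range t, ∑ h ∈ range t, (if g < h then K s α g + K s α h else 0) with hS
  have hsym : S = ∑ g ∈ range t, ∑ h ∈ range t, (if h < g then K s α g + K s α h else 0) := by
    rw [hS, Finset.sum_comm]
    refine Finset.sum_congr rfl fun g _ => Finset.sum_congr rfl fun h _ => ?_
    rw [Nat.add_comm (K s α h)]
  have htot : ∀ g ∈ range t, ∀ h ∈ range t,
      (if g < h then K s α g + K s α h else 0) + (if h < g then K s α g + K s α h else 0)
        + (if g = h then K s α g + K s α h else 0) = K s α g + K s α h := by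
    intro g _ h _
    rcases lt_trichotomy g h with hlt | heq | hgt
    · rw [if_pos hlt, if_neg (by omega), if_neg (by omega)]; omega
    · rw [if_neg (by omega), if_neg (by omega), if_pos heq]; omega
    · rw [if_neg (by omega), if_pos hgt, if_neg (by omega)]; omega
  have hdiag : ∑ g ∈ range t, ∑ h ∈ range t, (if g = h then K s α g + K s α h else 0)
      = 2 * (t * α + s) := by
    have : ∀ g ∈ range t, ∑ h ∈ range t, (if g = h then K s α g + K s α h else 0)
        = 2 * K s α g := by
      intro g hg
      rw [Finset.sum_ite_eq (range t) g (fun h => K s α g + K s α h), if_pos hg]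
      omega
    rw [Finset.sum_congr rfl this, ← Finset.mul_sum, count3 t s α hs]
  have hfull : ∑ g ∈ range t, ∑ h ∈ range t, (K s α g + K s α h) = 2 * (t * (t * α + s)) := by
    have : ∀ g ∈ range t, ∑ h ∈ range t, (K s α g + K s α h) = t * K s α g + (t * α + s) := by
      intro g _
      rw [Finset.sum_add_distrib, Finset.sum_const, count3 t s α hs, card_range, smul_eq_mul]
    rw [Finset.sum_congr rfl this, Finset.sum_add_distrib, Finset.sum_const, card_range,
      smul_eq_mul, ← Finset.mul_sum, count3 t s α hs]
    ring
  calc 2 * S + 2 * (t * α + s)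
      = S + (S + 2 * (t * α + s)) := by ring
    _ = S + (∑ g ∈ range t, ∑ h ∈ range t, (if h < g then K s α g + K s α h else 0)
          + 2 * (t * α + s)) := by rw [← hsym]
    _ = 2 * (t * (t * α + s)) := by
        rw [← hdiag, ← hfull]
        rw [hS, ← Finset.sum_add_distrib, ← Finset.sum_add_distrib]
        refine Finset.sum_congr rfl fun g hg => ?_
        rw [← Finset.sum_add_distrib, ← Finset.sum_add_distrib]
        refine Finset.sum_congr rfl fun h hh => ?_
        have := htot g hg h hh
        omega
end SkewCount

end

/-- The tangent space at `𝒲` to the congruence orbit of the generic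
skew-symmetric pencil `𝒲` of rank `2w` has dimension `n(n−1) − (n−2w−1)(n−w)`;
equivalently, the codimension of the congruence orbit of `𝒲` in the `n(n−1)`-dimensional
space of `n × n` skew-symmetric pencils equals `(n−2w−1)(n−w)`. -/
theorem codim_congOrbit_generic_skew_pencil
    (n w : ℕ) (hn : 2 ≤ n) (hw : 2 ≤ 2 * w) (hwn : 2 * w ≤ n - 1)
    (e : ((i : Fin (n - 2*w)) × Fin (2 * genIdx n w i + 1)) ≃ Fin n) :
    Module.finrank ℂ
        (LinearMap.range (congTangentMap (Matrix.reindex e e (WA n w))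
          (Matrix.reindex e e (WB n w)))) =
      n * (n - 1) - (n - 2*w - 1) * (n - w) := by
  classical
  have ht : 1 ≤ n - 2*w := by omega
  rw [SkewAux.range_conj e (WA n w) (WB n w),
    show WA n w = SkewAux.Cbig (genIdx n w) 0 from rfl,
    show WB n w = SkewAux.Cbig (genIdx n w) 1 from rfl]
  set t' : ℕ := n - 2*w with hT
  set kf : Fin t' → ℕ := genIdx n w with hkf
  set s : ℕ := w % t' with hsdef
  set α : ℕ := w / t' with hadef
  have hst : s ≤ t' := le_of_lt (Nat.mod_lt _ (by omega))
  have hwsum : t' * α + s = w := by rw [hadef, hsdef]; exact Nat.div_add_mod w t'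
  have hrn := LinearMap.finrank_range_add_finrank_ker
    (congTangentMap (SkewAux.Cbig kf 0) (SkewAux.Cbig kf 1))
  have hcard : Fintype.card (SkewAux.SIdx t' kf) = n := by
    rw [← Fintype.card_fin n]; exact Fintype.card_congr e
  have hM : Module.finrank ℂ (Matrix (SkewAux.SIdx t' kf) (SkewAux.SIdx t' kf) ℂ) = n * n := by
    rw [Module.finrank_matrix, hcard, Module.finrank_self, mul_one]
  rw [hM] at hrn
  have hker := SkewAux.finrank_ker kf
  rw [SkewAux.finrank_PSpace] at hker
  have hS1 : (∑ g : Fin t', ∑ h : Fin t', (kf h + 1 - kf g)) = t' * t' := by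
    have conv : (∑ g : Fin t', ∑ h : Fin t', (kf h + 1 - kf g))
        = ∑ g ∈ Finset.range t', ∑ h ∈ Finset.range t',
            (SkewCount.K s α h + 1 - SkewCount.K s α g) := by
      rw [← Fin.sum_univ_eq_sum_range
        (fun g => ∑ h ∈ Finset.range t', (SkewCount.K s α h + 1 - SkewCount.K s α g)) t']
      refine Finset.sum_congr rfl fun g _ => ?_
      rw [← Fin.sum_univ_eq_sum_range
        (fun h => (SkewCount.K s α h + 1 - SkewCount.K s α g.1)) t']
      rfl
    rw [conv, SkewCount.count1 t' s α hst]
  have hS3 : (∑ g : Fin t', 2 * kf g) = 2 * w := by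
    have conv : (∑ g : Fin t', 2 * kf g) = ∑ g ∈ Finset.range t', 2 * SkewCount.K s α g :=
      Fin.sum_univ_eq_sum_range (fun g => 2 * SkewCount.K s α g) t'
    rw [conv, ← Finset.mul_sum, SkewCount.count3 t' s α hst, hwsum]
  have hS2 : (∑ g : Fin t', ∑ h : Fin t', (if g < h then kf g + kf h else 0)) = t' * w - w := by
    have conv : (∑ g : Fin t', ∑ h : Fin t', (if g < h then kf g + kf h else 0))
        = ∑ g ∈ Finset.range t', ∑ h ∈ Finset.range t',
            (if g < h then SkewCount.K s α g + SkewCount.K s α h else 0) := by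
      rw [← Fin.sum_univ_eq_sum_range (fun g => ∑ h ∈ Finset.range t',
            (if g < h then SkewCount.K s α g + SkewCount.K s α h else 0)) t']
      refine Finset.sum_congr rfl fun g _ => ?_
      rw [← Fin.sum_univ_eq_sum_range
        (fun h => (if (g:ℕ) < h then SkewCount.K s α g.1 + SkewCount.K s α h else 0)) t']
      rfl
    have hc2 := SkewCount.count2 t' s α hst
    rw [hwsum] at hc2
    rw [conv]
    omega
  rw [hS1, hS2, hS3] at hker
  obtain ⟨u, hu⟩ : ∃ u, n = 2*w + u + 1 := ⟨n - 2*w - 1, by omega⟩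
  have htu : t' = u + 1 := by omega
  have hsub : (u + 1) * w - w = u * w := by
    have h' : (u + 1) * w = u * w + w := by ring
    omega
  have hD : t' * t' + ((t' * w - w) + 2 * w) = (u+1)*(u+1) + (u * w + 2 * w) := by
    rw [htu, hsub]
  rw [hD] at hker
  rw [hker] at hrn
  rw [show n - 2*w - 1 = u by omega, show n - w = w + u + 1 by omega,
    show n - 1 = 2*w + u by omega]
  have e1 : n * n = ((u+1) * (u+1) + (u * w + 2 * w)) + (4*w*w + 3*(w*u) + 2*w) := by
    rw [hu]; ring
  have e2 : n * (2*w + u) = u * (w + u + 1) + (4*w*w + 3*(w*u) + 2*w) := by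
    rw [hu]; ring
  rw [e2, Nat.add_sub_cancel_left]
  rw [e1] at hrn
  rw [Nat.add_comm
    (Module.finrank ℂ
      (LinearMap.range (congTangentMap (SkewAux.Cbig (genIdx n w) 0)
        (SkewAux.Cbig (genIdx n w) 1))))
    ((u + 1) * (u + 1) + (u * w + 2 * w))] at hrn
  exact Nat.add_left_cancel hrn
end

section
/- Let P(λ) be an m×m complex skew-symmetric matrix polynomial, i.e., a matrix with entries in ℂ[λ] satisfying P(λ)ᵀ = −P(λ). Then there exist an integer r with 2r ≤ m, a unimodular matrix polynomial F(λ) ∈ ℂ[λ]^{m×m} (one whose determinant is a nonzero constant), and monic polynomials g_1(λ), …, g_r(λ) with g_j dividing g_{j+1} for j = 1, …, r−1, such that F(λ)ᵀ P(λ) F(λ) equals the direct sum of the 2×2 blocks [[0, g_j(λ)], [−g_j(λ), 0]] for j = 1, …, r, followed by an (m−2r)×(m−2r) zero block. Moreover, r and the polynomials g_1, …, g_r are uniquely determined by P. -/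
open Matrix

noncomputable section
open Matrix Polynomial

namespace SkewAux

abbrev R := Polynomial ℂ

/-- `p` divides every `k × k` minor (with arbitrary, possibly repeating, row/column
selections) of `M`. -/
def DivMinors (p : R) (k m : ℕ) (M : Matrix (Fin m) (Fin m) R) : Prop :=
  ∀ (ρ γ : Fin k → Fin m), p ∣ (M.submatrix ρ γ).det

lemma DivMinors.mul_left {p : R} {k m : ℕ} {M : Matrix (Fin m) (Fin m) R}
    (h : DivMinors p k m M) (A : Matrix (Fin m) (Fin m) R) : DivMinors p k m (A * M) := by
  intro ρ γ
  have hrow : (fun i => (A * M).submatrix ρ γ i)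
      = fun i => ∑ z : Fin m, A (ρ i) z • (fun j => M z (γ j)) := by
    funext i; funext j
    simp [Matrix.mul_apply, Matrix.submatrix_apply]
  have hdet : ((A * M).submatrix ρ γ).det
      = (Matrix.detRowAlternating : _) ((A * M).submatrix ρ γ) := rfl
  rw [hdet]
  change p ∣ (Matrix.detRowAlternating : ((Fin k → R) [⋀^Fin k]→ₗ[R] R)).toMultilinearMap
    fun i => (A * M).submatrix ρ γ i
  rw [show (fun i => (A * M).submatrix ρ γ i)
      = fun i => ∑ z : Fin m, A (ρ i) z • (fun j => M z (γ j)) from hrow]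
  rw [MultilinearMap.map_sum]
  refine Finset.dvd_sum fun r _ => ?_
  rw [MultilinearMap.map_smul_univ]
  rw [smul_eq_mul]
  exact Dvd.dvd.mul_left (h r γ) _

lemma DivMinors.transpose {p : R} {k m : ℕ} {M : Matrix (Fin m) (Fin m) R}
    (h : DivMinors p k m M) : DivMinors p k m Mᵀ := by
  intro ρ γ
  have : Mᵀ.submatrix ρ γ = (M.submatrix γ ρ)ᵀ := rfl
  rw [this, Matrix.det_transpose]
  exact h γ ρ

lemma DivMinors.mul_right {p : R} {k m : ℕ} {M : Matrix (Fin m) (Fin m) R}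
    (h : DivMinors p k m M) (A : Matrix (Fin m) (Fin m) R) : DivMinors p k m (M * A) := by
  have := (h.transpose.mul_left Aᵀ).transpose
  rwa [Matrix.transpose_mul, Matrix.transpose_transpose, Matrix.transpose_transpose] at this

lemma DivMinors.congr {p : R} {k m : ℕ} {M : Matrix (Fin m) (Fin m) R}
    (h : DivMinors p k m M) (S : Matrix (Fin m) (Fin m) R) :
    DivMinors p k m (Sᵀ * M * S) :=
  (h.mul_left Sᵀ).mul_right S

variable {m r k : ℕ}

/-- The sequence `g 0, g 0, g 1, g 1, …` padded with zeros. -/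
def hseq (r : ℕ) (g : Fin r → R) (t : ℕ) : R :=
  if h : t < 2*r then g ⟨t/2, by omega⟩ else 0

/-- `∏_{t<k} hseq t`, the expected gcd of the `k×k` minors. -/
def dprod (r : ℕ) (g : Fin r → R) (k : ℕ) : R := ∏ t ∈ Finset.range k, hseq r g t

lemma hseq_mono {g : Fin r → R} (hg : ∀ a b : Fin r, a ≤ b → g a ∣ g b)
    {s t : ℕ} (hst : s ≤ t) : hseq r g s ∣ hseq r g t := by
  unfold hseq
  by_cases ht : t < 2*r
  · have hs : s < 2*r := by omega
    rw [dif_pos ht, dif_pos hs]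
    exact hg _ _ (by simp [Fin.le_def]; omega)
  · rw [dif_neg ht]; exact dvd_zero _
lemma hseq_dvd_entry {g : Fin r → R} (a b : Fin m) :
    hseq r g a.1 ∣ skewSmith m r g a b := by
  unfold skewSmith
  split_ifs with h1 h2
  · obtain ⟨hab, he, hb⟩ := h1
    have ha : a.1 < 2*r := by omega
    unfold hseq; rw [dif_pos ha]
  · obtain ⟨hab, he, hb⟩ := h2
    have ha : a.1 < 2*r := hb
    unfold hseq; rw [dif_pos ha]
    have : (⟨a.1/2, by omega⟩ : Fin r) = ⟨b.1/2, by omega⟩ := by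
      apply Fin.ext; simp; omega
    rw [this]
    exact dvd_neg.mpr (dvd_refl _)
  · exact dvd_zero _

lemma strictMono_le {f : Fin k → ℕ} (hf : StrictMono f) : ∀ n (i : Fin k), i.1 = n → n ≤ f i := by
  intro n
  induction n with
  | zero => omega
  | succ n ih =>
    intro i hi
    have hn : n < k := by omega
    have := ih ⟨n, hn⟩ rfl
    have : f ⟨n, hn⟩ < f i := hf (by simp [Fin.lt_def]; omega)
    omega

lemma prod_hseq_dvd {h : ℕ → R} (hmono : ∀ s t : ℕ, s ≤ t → h s ∣ h t)
    {ρ : Fin k → ℕ} (hinj : Function.Injective ρ) :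
    ∏ t ∈ Finset.range k, h t ∣ ∏ i : Fin k, h (ρ i) := by
  classical
  set T : Finset ℕ := Finset.image ρ Finset.univ with hT
  have hcard : T.card = k := by
    rw [hT, Finset.card_image_of_injective _ hinj, Finset.card_univ, Fintype.card_fin]
  have h2 : ∏ i : Fin k, h (ρ i) = ∏ t ∈ T, h t := by
    rw [hT, Finset.prod_image (fun a _ b _ hab => hinj hab)]
  rw [h2]
  have oe := T.orderIsoOfFin hcard
  have h3 : ∏ t ∈ T, h t = ∏ i : Fin k, h (oe i).1 := by
    rw [← Finset.prod_coe_sort T h]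
    exact (Fintype.prod_equiv oe.toEquiv _ _ (fun i => rfl)).symm
  rw [h3, ← Fin.prod_univ_eq_prod_range]
  refine Finset.prod_dvd_prod_of_dvd _ _ fun i _ => ?_
  refine hmono _ _ ?_
  have : StrictMono fun i : Fin k => ((oe i : ℕ)) := fun a b hab => by
    have := oe.lt_iff_lt.mpr hab
    exact this
  exact strictMono_le this i.1 i rfl

lemma skewSmith_apply_eq_zero_of_ge {g : Fin r → R} (a b : Fin m) (ha : 2*r ≤ a.1) :
    skewSmith m r g a b = 0 := by
  unfold skewSmith
  split_ifs with h1 h2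
  · omega
  · omega
  · rfl

lemma divMinors_skewSmith {g : Fin r → R} (hg : ∀ a b : Fin r, a ≤ b → g a ∣ g b) :
    DivMinors (dprod r g k) k m (skewSmith m r g) := by
  intro ρ γ
  by_cases hinj : Function.Injective ρ
  · rw [Matrix.det_apply]
    refine Finset.dvd_sum fun σ _ => ?_
    have key : dprod r g k ∣ ∏ i : Fin k, skewSmith m r g (ρ (σ i)) (γ i) := by
      refine dvd_trans ?_ (Finset.prod_dvd_prod_of_dvd _ _ fun i _ => hseq_dvd_entry (ρ (σ i)) (γ i))
      have hinj2 : Function.Injective fun i => (ρ (σ i)).1 :=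
        Fin.val_injective.comp (hinj.comp σ.injective)
      exact prod_hseq_dvd (fun s t hst => hseq_mono hg hst) hinj2
    rcases Int.units_eq_one_or (Equiv.Perm.sign σ) with h | h <;> rw [h]
    · simpa using key
    · rw [Units.neg_smul, one_smul]
      exact (dvd_neg).mpr key
  · rw [Function.not_injective_iff] at hinj
    obtain ⟨i, j, hij, hne⟩ := hinj
    refine Dvd.intro 0 ?_
    rw [mul_zero]
    exact (Matrix.det_zero_of_row_eq hne (by funext c; simp [Matrix.submatrix_apply, hij])).symm

/-- partner of an index: `2j ↔ 2j+1`. -/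
def pt (t : ℕ) : ℕ := if t % 2 = 0 then t+1 else t-1

lemma pt_lt {t : ℕ} (ht : t < k) (hk : k ≤ 2*r) (hm : 2*r ≤ m) : pt t < m := by
  unfold pt; split_ifs with h <;> omega

lemma dvd_dprod_of_divMinors {g : Fin r → R} (hk : k ≤ 2*r) (hm : 2*r ≤ m)
    {p : R} (hp : DivMinors p k m (skewSmith m r g)) : p ∣ dprod r g k := by
  have hkm : k ≤ m := by omega
  set ρ : Fin k → Fin m := fun i => ⟨i.1, by omega⟩ with hρ
  set γ : Fin k → Fin m := fun i => ⟨pt i.1, pt_lt i.2 hk hm⟩ with hγ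
  set d : Fin k → R := fun i =>
    if i.1 % 2 = 0 then g ⟨i.1/2, by omega⟩ else -(g ⟨i.1/2, by omega⟩) with hd
  have hsub : (skewSmith m r g).submatrix ρ γ = Matrix.diagonal d := by
    refine Matrix.ext fun i j => ?_
    by_cases hij : i = j
    · subst hij
      rw [Matrix.diagonal_apply_eq]
      simp only [Matrix.submatrix_apply, hρ, hγ, hd, skewSmith, Fin.val_mk]
      by_cases hpar : i.1 % 2 = 0
      · rw [if_pos hpar]
        have hp1 : pt i.1 = i.1 + 1 := by unfold pt; rw [if_pos hpar]
        split_ifs with h1 h2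
        · congr 1
        · simp only [hp1] at h2; omega
        · simp only [hp1] at h1 h2
          exfalso; apply h1; refine ⟨?_, hpar, ?_⟩
          · trivial
          · omega
      · rw [if_neg hpar]
        have hp1 : pt i.1 = i.1 - 1 := by unfold pt; rw [if_neg hpar]
        split_ifs with h1 h2
        · simp only [hp1] at h1; omega
        · have hb1 : pt i.1 / 2 < r := by omega
          have hb2 : i.1 / 2 < r := by omega
          have hidx : (⟨pt i.1 / 2, hb1⟩ : Fin r) = ⟨i.1 / 2, hb2⟩ := Fin.ext (by
            show pt i.1 / 2 = i.1 / 2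
            rw [hp1]; omega)
          exact neg_inj.mpr (congrArg g hidx)
        · simp only [hp1] at h1 h2
          exfalso; apply h2; refine ⟨by omega, by omega, by omega⟩
    · rw [Matrix.diagonal_apply_ne _ hij]
      have hvne : i.1 ≠ j.1 := fun h => hij (Fin.ext h)
      simp only [Matrix.submatrix_apply, hρ, hγ, skewSmith, Fin.val_mk]
      by_cases hpar : j.1 % 2 = 0
      · have hp1 : pt j.1 = j.1 + 1 := by unfold pt; rw [if_pos hpar]
        split_ifs with h1 h2
        · exfalso; simp only [hp1] at h1; omega
        · exfalso; simp only [hp1] at h2; omega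
        · rfl
      · have hp1 : pt j.1 = j.1 - 1 := by unfold pt; rw [if_neg hpar]
        split_ifs with h1 h2
        · exfalso; simp only [hp1] at h1; omega
        · exfalso; simp only [hp1] at h2; omega
        · rfl
  have hdet := hp ρ γ
  rw [hsub, Matrix.det_diagonal] at hdet
  set e : Fin k → R := fun i => if i.1 % 2 = 0 then 1 else -1 with he
  have hde : ∀ i : Fin k, d i = e i * hseq r g i.1 := by
    intro i
    have hlt : i.1 < 2*r := by omega
    simp only [hd, he, hseq, dif_pos hlt]
    split_ifs with h
    · rw [one_mul]
    · rw [neg_one_mul]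
  have hprod : ∏ i : Fin k, d i = (∏ i : Fin k, e i) * dprod r g k := by
    rw [Finset.prod_congr rfl fun i _ => hde i, Finset.prod_mul_distrib]
    congr 1
    rw [dprod, ← Fin.prod_univ_eq_prod_range]
  have hunit : (∏ i : Fin k, e i) * (∏ i : Fin k, e i) = 1 := by
    rw [← Finset.prod_mul_distrib]
    refine Finset.prod_eq_one fun i _ => ?_
    simp only [he]; split_ifs <;> ring
  rw [hprod] at hdet
  have : dprod r g k = (∏ i : Fin k, e i) * ((∏ i : Fin k, e i) * dprod r g k) := by
    rw [← mul_assoc, hunit, one_mul]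
  rw [this]
  exact hdet.mul_left _

lemma divMinors_zero_skewSmith {g : Fin r → R} :
    DivMinors 0 (2*r+1) m (skewSmith m r g) := by
  intro ρ γ
  rw [zero_dvd_iff]
  by_cases hbig : ∃ i, 2*r ≤ (ρ i).1
  · obtain ⟨i, hi⟩ := hbig
    exact Matrix.det_eq_zero_of_row_eq_zero i
      (fun j => skewSmith_apply_eq_zero_of_ge _ _ hi)
  · push_neg at hbig
    have hni : ¬ Function.Injective fun i : Fin (2*r+1) => (⟨(ρ i).1, hbig i⟩ : Fin (2*r)) := by
      intro hinj
      have := Fintype.card_le_of_injective _ hinj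
      simp only [Fintype.card_fin] at this; omega
    rw [Function.not_injective_iff] at hni
    obtain ⟨i, j, hij, hne⟩ := hni
    have hρij : ρ i = ρ j := by
      have h2 := congrArg Fin.val hij
      exact Fin.ext h2
    exact Matrix.det_zero_of_row_eq hne (by funext c; simp [Matrix.submatrix_apply, hρij])

lemma dprod_monic {g : Fin r → R} (hmon : ∀ j, (g j).Monic) (hk : k ≤ 2*r) :
    (dprod r g k).Monic := by
  apply Polynomial.monic_prod_of_monic
  intro t ht; rw [Finset.mem_range] at ht
  unfold hseq; rw [dif_pos (by omega)]; exact hmon _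

lemma skewSmith_unique {m r r' : ℕ} (g : Fin r → R) (g' : Fin r' → R)
    (hm : 2*r ≤ m) (hm' : 2*r' ≤ m)
    (hmon : ∀ j, (g j).Monic) (hmon' : ∀ j, (g' j).Monic)
    (hg : ∀ a b : Fin r, a ≤ b → g a ∣ g b) (hg' : ∀ a b : Fin r', a ≤ b → g' a ∣ g' b)
    (G : Matrix (Fin m) (Fin m) R) (hG : IsUnit G.det)
    (heq : skewSmith m r' g' = Gᵀ * skewSmith m r g * G) :
    r' = r ∧ ∀ j (hj : j < r) (hj' : j < r'), g' ⟨j, hj'⟩ = g ⟨j, hj⟩ := by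
  have fwd : ∀ p k, DivMinors p k m (skewSmith m r g) → DivMinors p k m (skewSmith m r' g') := by
    intro p k h; rw [heq]; exact h.congr G
  have bwd : ∀ p k, DivMinors p k m (skewSmith m r' g') → DivMinors p k m (skewSmith m r g) := by
    intro p k h
    have h2 := h.congr G⁻¹
    have h1 : G * G⁻¹ = 1 := Matrix.mul_nonsing_inv _ hG
    have key : (G⁻¹)ᵀ * skewSmith m r' g' * G⁻¹ = skewSmith m r g := by
      rw [heq]
      have : (G⁻¹)ᵀ * (Gᵀ * skewSmith m r g * G) * G⁻¹
          = (G * G⁻¹)ᵀ * skewSmith m r g * (G * G⁻¹) := by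
        rw [Matrix.transpose_mul]
        simp only [Matrix.mul_assoc]
      rw [this, h1, Matrix.transpose_one, Matrix.one_mul, Matrix.mul_one]
    rwa [key] at h2
  have hr : r' = r := by
    rcases Nat.lt_trichotomy r' r with hlt | heqr | hgt
    · exfalso
      have z2 := bwd 0 (2*r'+1) divMinors_zero_skewSmith
      have hz := dvd_dprod_of_divMinors (g := g) (k := 2*r'+1) (by omega) hm z2
      rw [zero_dvd_iff] at hz
      exact (dprod_monic hmon (by omega)).ne_zero hz
    · exact heqr
    · exfalso
      have z2 := fwd 0 (2*r+1) divMinors_zero_skewSmith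
      have hz := dvd_dprod_of_divMinors (g := g') (k := 2*r+1) (by omega) hm' z2
      rw [zero_dvd_iff] at hz
      exact (dprod_monic hmon' (by omega)).ne_zero hz
  have hdp : ∀ k, k ≤ 2*r → dprod r g k = dprod r' g' k := by
    intro k hk
    have h1 : dprod r g k ∣ dprod r' g' k :=
      dvd_dprod_of_divMinors (by omega) hm' (fwd _ _ (divMinors_skewSmith hg))
    have h2 : dprod r' g' k ∣ dprod r g k :=
      dvd_dprod_of_divMinors hk hm (bwd _ _ (divMinors_skewSmith hg'))
    exact Polynomial.eq_of_monic_of_associated (dprod_monic hmon hk)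
      (dprod_monic hmon' (by omega)) (associated_of_dvd_dvd h1 h2)
  refine ⟨hr, fun j hj hj' => ?_⟩
  have e1 : dprod r g (2*j+2) = dprod r g (2*j+1) * g ⟨j, hj⟩ := by
    unfold dprod
    rw [Finset.prod_range_succ]
    congr 1
    unfold hseq; rw [dif_pos (by omega)]
    congr 1; apply Fin.ext; simp; omega
  have e2 : dprod r' g' (2*j+2) = dprod r' g' (2*j+1) * g' ⟨j, hj'⟩ := by
    unfold dprod
    rw [Finset.prod_range_succ]
    congr 1
    unfold hseq; rw [dif_pos (by omega)]
    congr 1; apply Fin.ext; simp; omega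
  have h21 := hdp (2*j+1) (by omega)
  have h22 := hdp (2*j+2) (by omega)
  have : dprod r g (2*j+1) * g ⟨j, hj⟩ = dprod r g (2*j+1) * g' ⟨j, hj'⟩ := by
    rw [← e1, h22, e2, ← h21]
  exact (mul_left_cancel₀ (dprod_monic hmon (by omega)).ne_zero this).symm

/-! ### Existence machinery -/

/-- Unimodular congruence over `ℂ[λ]`. -/
def Cong {m : ℕ} (P Q : Matrix (Fin m) (Fin m) R) : Prop :=
  ∃ E : Matrix (Fin m) (Fin m) R, IsUnit E.det ∧ Q = Eᵀ * P * E

/-- The existence statement: `P` is unimodularly congruent to a skew Smith form. -/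
def Goal (m : ℕ) (P : Matrix (Fin m) (Fin m) R) : Prop :=
  ∃ r, 2*r ≤ m ∧ ∃ (F : Matrix (Fin m) (Fin m) R) (g : Fin r → R),
    IsUnit F.det ∧ (∀ j, (g j).Monic) ∧ (∀ a b : Fin r, a ≤ b → g a ∣ g b) ∧
    Fᵀ * P * F = skewSmith m r g

lemma Cong.trans {m : ℕ} {P Q S : Matrix (Fin m) (Fin m) R}
    (h1 : Cong P Q) (h2 : Cong Q S) : Cong P S := by
  obtain ⟨E1, hdet1, rfl⟩ := h1
  obtain ⟨E2, hdet2, rfl⟩ := h2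
  refine ⟨E1 * E2, by rw [Matrix.det_mul]; exact hdet1.mul hdet2, ?_⟩
  rw [Matrix.transpose_mul]
  simp only [Matrix.mul_assoc]

lemma Cong.goal {m : ℕ} {P Q : Matrix (Fin m) (Fin m) R}
    (h : Cong P Q) (hQ : Goal m Q) : Goal m P := by
  obtain ⟨E, hdet, rfl⟩ := h
  obtain ⟨r, hr, F, g, hF, hmon, hchain, heq⟩ := hQ
  refine ⟨r, hr, E * F, g, by rw [Matrix.det_mul]; exact hdet.mul hF, hmon, hchain, ?_⟩
  rw [← heq, Matrix.transpose_mul]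
  simp only [Matrix.mul_assoc]

lemma Cong.skew {m : ℕ} {P Q : Matrix (Fin m) (Fin m) R}
    (hP : Pᵀ = -P) (h : Cong P Q) : Qᵀ = -Q := by
  obtain ⟨E, _, rfl⟩ := h
  rw [Matrix.transpose_mul, Matrix.transpose_mul, Matrix.transpose_transpose, hP]
  simp only [Matrix.neg_mul, Matrix.mul_neg, Matrix.mul_assoc, neg_inj]

lemma skew_diag {m : ℕ} {P : Matrix (Fin m) (Fin m) R} (hP : Pᵀ = -P) (a : Fin m) :
    P a a = 0 := by
  have h := congrFun (congrFun hP a) a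
  rw [Matrix.transpose_apply, Matrix.neg_apply] at h
  have h2 : (2 : R) * P a a = 0 := by ring_nf; linear_combination h
  rcases mul_eq_zero.mp h2 with h3 | h3
  · exfalso
    have := congrArg (Polynomial.eval 0) h3
    norm_num at this
  · exact h3

lemma skew_apply {m : ℕ} {P : Matrix (Fin m) (Fin m) R} (hP : Pᵀ = -P) (a b : Fin m) :
    P b a = -P a b := by
  have h := congrFun (congrFun hP a) b
  rwa [Matrix.transpose_apply, Matrix.neg_apply] at h

/-- Add `c·(row a)` to row `b` and `c·(column a)` to column `b` (a congruence). -/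
def rcAdd {m : ℕ} (P : Matrix (Fin m) (Fin m) R) (a b : Fin m) (c : R) :
    Matrix (Fin m) (Fin m) R :=
  Matrix.of fun x y =>
    P x y + (if x = b then c * P a y else 0) + (if y = b then P x a * c else 0)

lemma rcAdd_apply {m : ℕ} (P : Matrix (Fin m) (Fin m) R) (a b : Fin m) (c : R) (x y : Fin m) :
    rcAdd P a b c x y
      = P x y + (if x = b then c * P a y else 0) + (if y = b then P x a * c else 0) := rfl

lemma cong_rcAdd {m : ℕ} (P : Matrix (Fin m) (Fin m) R) {a b : Fin m} (hab : a ≠ b)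
    (hdiag : P a a = 0) (c : R) : Cong P (rcAdd P a b c) := by
  refine ⟨Matrix.transvection a b c, ?_, ?_⟩
  · rw [Matrix.det_transvection_of_ne a b hab c]; exact isUnit_one
  · have hST : (Matrix.single a b c)ᵀ = Matrix.single b a c := by
      refine Matrix.ext fun x y => ?_
      simp only [Matrix.transpose_apply, Matrix.single]
      simp only [Matrix.of_apply]
      by_cases h1 : a = y <;> by_cases h2 : b = x <;> simp [h1, h2, and_comm]
    rw [Matrix.transvection, Matrix.transpose_add, Matrix.transpose_one, hST]
    refine Matrix.ext fun x y => ?_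
    have expand : (1 + Matrix.single b a c) * P * (1 + Matrix.single a b c)
        = P + Matrix.single b a c * P + P * Matrix.single a b c
          + Matrix.single b a c * P * Matrix.single a b c := by
      rw [Matrix.add_mul, Matrix.add_mul, Matrix.mul_add, Matrix.mul_add,
        Matrix.one_mul, Matrix.mul_one]
      simp only [Matrix.mul_one]
      abel
    rw [expand]
    simp only [Matrix.add_apply, rcAdd_apply]
    have hT : (Matrix.single b a c * P) x y = if x = b then c * P a y else 0 := by
      by_cases hx : x = b
      · rw [if_pos hx, hx]; exact Matrix.single_mul_apply_same c b a y P
      · rw [if_neg hx]; exact Matrix.single_mul_apply_of_ne c b a x y hx P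
    have hS : (P * Matrix.single a b c) x y = if y = b then P x a * c else 0 := by
      by_cases hy : y = b
      · rw [if_pos hy, hy]; exact Matrix.mul_single_apply_same c a b x P
      · rw [if_neg hy]; exact Matrix.mul_single_apply_of_ne c a b x y hy P
    have hTS : (Matrix.single b a c * P * Matrix.single a b c) x y = 0 := by
      by_cases hy : y = b
      · rw [hy]
        rw [Matrix.mul_single_apply_same c a b x
          (Matrix.single b a c * P)]
        by_cases hx : x = b
        · rw [hx]
          rw [Matrix.single_mul_apply_same c b a a P, hdiag, mul_zero, zero_mul]
        · rw [Matrix.single_mul_apply_of_ne c b a x a hx P, zero_mul]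
      · rw [Matrix.mul_single_apply_of_ne c a b x y hy
          (Matrix.single b a c * P)]
    rw [hT, hS, hTS, add_zero]

/-- Simultaneous permutation of rows and columns is a congruence. -/
lemma cong_perm {m : ℕ} (P : Matrix (Fin m) (Fin m) R) (π : Equiv.Perm (Fin m)) :
    Cong P (P.submatrix π π) := by
  set E : Matrix (Fin m) (Fin m) R :=
    Matrix.of fun x y => if x = π y then (1 : R) else 0 with hE
  have hEeq : E = (1 : Matrix (Fin m) (Fin m) R).submatrix (π⁻¹ : Equiv.Perm (Fin m)) id := by
    refine Matrix.ext fun x y => ?_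
    simp only [hE, Matrix.of_apply, Matrix.submatrix_apply, Matrix.one_apply, id_eq]
    congr 1
    simp only [eq_iff_iff]
    constructor
    · intro h; subst h; simp
    · intro h; rw [← h]; simp
  refine ⟨E, ?_, ?_⟩
  · rw [hEeq]
    have : ((1 : Matrix (Fin m) (Fin m) R).submatrix (π⁻¹ : Equiv.Perm (Fin m)) id).det
        = Equiv.Perm.sign (π⁻¹) * (1 : Matrix (Fin m) (Fin m) R).det :=
      Matrix.det_permute _ _
    rw [this, Matrix.det_one, mul_one]
    rcases Int.units_eq_one_or (Equiv.Perm.sign π⁻¹) with h | h <;> rw [h]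
    · simp
    · simp
  · refine Matrix.ext fun x y => ?_
    have hPE : ∀ (M : Matrix (Fin m) (Fin m) R) (x y : Fin m), (M * E) x y = M x (π y) := by
      intro M x y
      simp only [Matrix.mul_apply, hE, Matrix.of_apply, mul_ite, mul_one, mul_zero]
      rw [Finset.sum_ite_eq' Finset.univ (π y) (fun z => M x z)]
      simp
    have hEP : ∀ (M : Matrix (Fin m) (Fin m) R) (x y : Fin m), (Eᵀ * M) x y = M (π x) y := by
      intro M x y
      simp only [Matrix.mul_apply, Matrix.transpose_apply, hE, Matrix.of_apply, ite_mul,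
        one_mul, zero_mul]
      rw [Finset.sum_ite_eq' Finset.univ (π x) (fun z => M z y)]
      simp
    rw [Matrix.submatrix_apply,
      show (Eᵀ * P * E) x y = (Eᵀ * P) x (π y) from hPE _ x y, hEP P x (π y)]

/-- Division with remainder producing a strictly smaller-degree nonzero remainder. -/
lemma remStep (g e : R) (hg : g ≠ 0) (hnd : ¬ g ∣ e) :
    ∃ q : R, e - q * g ≠ 0 ∧ (e - q * g).natDegree < g.natDegree := by
  set gm : R := g * Polynomial.C (g.leadingCoeff)⁻¹ with hgm
  have hmon : gm.Monic := Polynomial.monic_mul_leadingCoeff_inv hg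
  have hlc : g.leadingCoeff ≠ 0 := Polynomial.leadingCoeff_ne_zero.mpr hg
  refine ⟨(e /ₘ gm) * Polynomial.C (g.leadingCoeff)⁻¹, ?_, ?_⟩
  · intro h0
    apply hnd
    have hmod : e %ₘ gm = 0 := by
      rw [Polynomial.modByMonic_eq_sub_mul_div e gm, ← h0]
      ring
    have hdd : gm ∣ e := (Polynomial.modByMonic_eq_zero_iff_dvd hmon).mp hmod
    exact dvd_trans (Dvd.intro _ rfl) hdd
  · have hrem : e - e /ₘ gm * Polynomial.C g.leadingCoeff⁻¹ * g = e %ₘ gm := by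
      rw [Polynomial.modByMonic_eq_sub_mul_div e gm, hgm]
      ring
    rw [hrem]
    have hne : e %ₘ gm ≠ 0 := by
      intro h0
      apply hnd
      have hdd : gm ∣ e := (Polynomial.modByMonic_eq_zero_iff_dvd hmon).mp h0
      exact dvd_trans (Dvd.intro _ rfl) hdd
    have hdeg := Polynomial.degree_modByMonic_lt e hmon
    have h1 := Polynomial.natDegree_lt_natDegree hne hdeg
    have h2 : gm.natDegree = g.natDegree := by
      rw [hgm, Polynomial.natDegree_mul hg (by
        simp only [ne_eq, Polynomial.C_eq_zero]
        exact inv_ne_zero hlc)]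
      simp
    omega

/-- The `2×2` skew block `[[0,g],[-g,0]]`. -/
def Sblk (g : R) : Matrix (Fin 2) (Fin 2) R :=
  Matrix.of fun a b => if a.1 = 0 ∧ b.1 = 1 then g else if a.1 = 1 ∧ b.1 = 0 then -g else 0

/-- Prepend an element to a tuple of invariant factors. -/
def gcons {r : ℕ} (g0 : R) (g : Fin r → R) : Fin (r+1) → R :=
  fun t => if h : t.1 = 0 then g0 else g ⟨t.1 - 1, by omega⟩

lemma sumRep {k : ℕ} (x : Fin (2+k)) :
    finSumFinEquiv.symm x
      = if h : x.1 < 2 then Sum.inl (⟨x.1, h⟩ : Fin 2) else Sum.inr (⟨x.1 - 2, by omega⟩ : Fin k) := by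
  apply finSumFinEquiv.injective
  rw [Equiv.apply_symm_apply]
  by_cases h : x.1 < 2
  · rw [dif_pos h, finSumFinEquiv_apply_left]
    exact (Fin.ext rfl).symm
  · rw [dif_neg h, finSumFinEquiv_apply_right]
    apply Fin.ext
    simp [Fin.natAdd]
    omega

lemma goal_assemble {k r₂ : ℕ} (hr₂ : 2*r₂ ≤ k) (gm : R) (g₂ : Fin r₂ → R) :
    Matrix.reindex finSumFinEquiv finSumFinEquiv
        (Matrix.fromBlocks (Sblk gm) 0 0 (skewSmith k r₂ g₂))
      = skewSmith (2+k) (r₂+1) (gcons gm g₂) := by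
  refine Matrix.ext fun x y => ?_
  rw [Matrix.reindex_apply, Matrix.submatrix_apply, sumRep, sumRep]
  by_cases hx : x.1 < 2 <;> by_cases hy : y.1 < 2
  · rw [dif_pos hx, dif_pos hy, Matrix.fromBlocks_apply₁₁]
    simp only [Sblk, Matrix.of_apply, skewSmith]
    split_ifs <;> first | rfl | omega | (exfalso; omega) | skip
    · rename_i h1 h2
      simp only [gcons]
      rw [dif_pos (by omega)]
    · rename_i h1 h2 h3
      simp only [gcons]
      rw [dif_pos (by omega)]
  · rw [dif_pos hx, dif_neg hy, Matrix.fromBlocks_apply₁₂]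
    simp only [Matrix.zero_apply, skewSmith]
    split_ifs <;> first | rfl | omega
  · rw [dif_neg hx, dif_pos hy, Matrix.fromBlocks_apply₂₁]
    simp only [Matrix.zero_apply, skewSmith]
    split_ifs <;> first | rfl | omega
  · rw [dif_neg hx, dif_neg hy, Matrix.fromBlocks_apply₂₂]
    simp only [skewSmith]
    split_ifs <;> first | rfl | omega | skip
    · simp only [gcons]
      rw [dif_neg (by omega)]
      congr 1
      apply Fin.ext
      simp
      omega
    · simp only [gcons]
      rw [dif_neg (by omega)]
      congr 2
      apply Fin.ext
      simp
      omega

lemma dvd_entries_mul {m : ℕ} {q : R} {P : Matrix (Fin m) (Fin m) R}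
    (h : ∀ a b, q ∣ P a b) (A B : Matrix (Fin m) (Fin m) R) :
    ∀ a b, q ∣ (A * P * B) a b := by
  intro a b
  rw [Matrix.mul_apply]
  refine Finset.dvd_sum fun c _ => ?_
  rw [Matrix.mul_apply, Finset.sum_mul]
  refine Finset.dvd_sum fun e _ => ?_
  exact ((h e c).mul_left _).mul_right _

lemma chain_mono {r : ℕ} {g : Fin r → R}
    (h : ∀ (j : ℕ) (hj : j + 1 < r), g ⟨j, by omega⟩ ∣ g ⟨j+1, hj⟩) :
    ∀ a b : Fin r, a ≤ b → g a ∣ g b := by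
  have key : ∀ n (a b : Fin r), b.1 = a.1 + n → g a ∣ g b := by
    intro n
    induction n with
    | zero => intro a b hb; rw [show b = a from Fin.ext (by omega)]
    | succ n ih =>
      intro a b hb
      have hmid : a.1 + n + 1 < r := by omega
      rw [show b = (⟨a.1 + n + 1, hmid⟩ : Fin r) from
        Fin.ext ((by omega : b.1 = a.1 + n + 1))]
      exact dvd_trans (ih a ⟨a.1 + n, by omega⟩ rfl) (h (a.1 + n) hmid)
  intro a b hab
  exact key (b.1 - a.1) a b (by rw [Fin.le_def] at hab; omega)

lemma goal_of_eq {m r : ℕ} (P : Matrix (Fin m) (Fin m) R) (g : Fin r → R)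
    (hr : 2*r ≤ m) (hmon : ∀ j, (g j).Monic) (hchain : ∀ a b : Fin r, a ≤ b → g a ∣ g b)
    (heq : P = skewSmith m r g) : Goal m P :=
  ⟨r, hr, 1, g, by simp, hmon, hchain, by
    rw [Matrix.transpose_one, Matrix.one_mul, Matrix.mul_one, heq]⟩

lemma goal_zero {m : ℕ} : Goal m 0 := by
  refine ⟨0, by omega, 1, Fin.elim0, by simp, fun j => j.elim0, fun a b _ => a.elim0, ?_⟩
  rw [Matrix.transpose_one, Matrix.one_mul, Matrix.mul_one]
  refine Matrix.ext fun a b => ?_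
  rw [Matrix.zero_apply, skewSmith, dif_neg (by rintro ⟨-, -, h⟩; omega),
    dif_neg (by rintro ⟨-, -, h⟩; omega)]

lemma skewSmith_congr {m m' r : ℕ} (g : Fin r → R) (a b : Fin m) (a' b' : Fin m')
    (ha : a.1 = a'.1) (hb : b.1 = b'.1) :
    skewSmith m r g a b = skewSmith m' r g a' b' := by
  unfold skewSmith
  split_ifs <;>
    first
      | rfl
      | (exfalso; omega)
      | (congr 1; exact Fin.ext (by simp; omega))
      | (congr 2; exact Fin.ext (by simp; omega))

lemma goal_cast {m k : ℕ} (h : m = 2 + k) (P : Matrix (Fin m) (Fin m) R)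
    (hQ : Goal (2+k) (P.submatrix (finCongr h.symm) (finCongr h.symm))) : Goal m P := by
  obtain ⟨r, hr, F, g, hF, hmon, hchain, heq⟩ := hQ
  set e : Fin (2+k) ≃ Fin m := finCongr h.symm with he
  refine ⟨r, by omega, F.submatrix e.symm e.symm, g, ?_, hmon, hchain, ?_⟩
  · rwa [Matrix.det_submatrix_equiv_self]
  · have hPQ : P = (P.submatrix e e).submatrix e.symm e.symm := by
      simp [Matrix.submatrix_submatrix]
    rw [Matrix.transpose_submatrix, hPQ,
      Matrix.submatrix_mul_equiv Fᵀ (P.submatrix e e) _ _ _,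
      Matrix.submatrix_mul_equiv _ F _ _ _, heq]
    refine Matrix.ext fun a b => ?_
    rw [Matrix.submatrix_apply]
    exact skewSmith_congr g _ _ a b (by simp [he]) (by simp [he])

/-- Scaling the second row/column of a `Sblk` block by `u` (a congruence). -/
lemma cong_scale {k : ℕ} (g u : R) (hu : IsUnit u) (P₂ : Matrix (Fin k) (Fin k) R) :
    Cong (Matrix.reindex finSumFinEquiv finSumFinEquiv (Matrix.fromBlocks (Sblk g) 0 0 P₂))
      (Matrix.reindex finSumFinEquiv finSumFinEquiv
        (Matrix.fromBlocks (Sblk (g*u)) 0 0 P₂)) := by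
  set D : Matrix (Fin 2) (Fin 2) R := Matrix.diagonal (fun a => if a.1 = 1 then u else 1) with hD
  set E0 : Matrix (Fin 2 ⊕ Fin k) (Fin 2 ⊕ Fin k) R :=
    Matrix.fromBlocks D 0 0 1 with hE0
  set e := (finSumFinEquiv : Fin 2 ⊕ Fin k ≃ Fin (2+k)) with hee
  refine ⟨E0.submatrix e.symm e.symm, ?_, ?_⟩
  · rw [Matrix.det_submatrix_equiv_self, hE0, Matrix.det_fromBlocks_zero₂₁, Matrix.det_one,
      mul_one, hD, Matrix.det_diagonal]
    rw [Fin.prod_univ_two]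
    simpa using hu
  · have hDS : Dᵀ * Sblk g * D = Sblk (g * u) := by
      rw [hD, Matrix.diagonal_transpose]
      refine Matrix.ext fun a b => ?_
      rw [Matrix.mul_diagonal, Matrix.diagonal_mul]
      simp only [Sblk, Matrix.of_apply]
      fin_cases a <;> fin_cases b <;> simp <;> ring
    have hE0t : E0ᵀ = Matrix.fromBlocks Dᵀ 0 0 1 := by
      rw [hE0, Matrix.fromBlocks_transpose]
      congr 1 <;> simp
    have hmul : E0ᵀ * Matrix.fromBlocks (Sblk g) 0 0 P₂ * E0
        = Matrix.fromBlocks (Sblk (g*u)) 0 0 P₂ := by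
      rw [hE0t, hE0, Matrix.fromBlocks_multiply, Matrix.fromBlocks_multiply]
      rw [← hDS]
      congr 1 <;> simp [Matrix.mul_assoc]
    rw [Matrix.reindex_apply, Matrix.reindex_apply, Matrix.transpose_submatrix,
      Matrix.submatrix_mul_equiv, Matrix.submatrix_mul_equiv, hmul]

lemma split_core {k : ℕ} (Q : Matrix (Fin (2+k)) (Fin (2+k)) R) (hskew : Qᵀ = -Q)
    (i0 i1 : Fin (2+k)) (h0 : i0.1 = 0) (h1 : i1.1 = 1)
    (hdvd : ∀ a b, Q i0 i1 ∣ Q a b) :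
    ∃ P₂ : Matrix (Fin k) (Fin k) R, P₂ᵀ = -P₂ ∧ (∀ a b, Q i0 i1 ∣ P₂ a b) ∧
      Cong Q (Matrix.reindex finSumFinEquiv finSumFinEquiv
        (Matrix.fromBlocks (Sblk (Q i0 i1)) 0 0 P₂)) := by
  set e := (finSumFinEquiv : Fin 2 ⊕ Fin k ≃ Fin (2+k)) with hee
  set g' : R := Q i0 i1 with hg'
  set Q₀ : Matrix (Fin 2 ⊕ Fin k) (Fin 2 ⊕ Fin k) R := Q.submatrix e e with hQ₀
  have hskew₀ : Q₀ᵀ = -Q₀ := by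
    refine Matrix.ext fun a b => ?_
    simp only [hQ₀, Matrix.transpose_apply, Matrix.submatrix_apply, Matrix.neg_apply]
    exact skew_apply hskew _ _
  have hel : ∀ a : Fin 2, (e (Sum.inl a)).1 = a.1 := by
    intro a; rw [hee, finSumFinEquiv_apply_left]; rfl
  have he0 : e (Sum.inl (⟨0, by norm_num⟩ : Fin 2)) = i0 := Fin.ext (by
    rw [hel]; show (0:ℕ) = i0.1; omega)
  have he1 : e (Sum.inl (⟨1, by norm_num⟩ : Fin 2)) = i1 := Fin.ext (by
    rw [hel]; show (1:ℕ) = i1.1; omega)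
  set S := Q₀.toBlocks₁₁ with hSdef
  set B := Q₀.toBlocks₁₂ with hBdef
  set C := Q₀.toBlocks₂₁ with hCdef
  set D := Q₀.toBlocks₂₂ with hDdef
  have hS : S = Sblk g' := by
    refine Matrix.ext fun a b => ?_
    have hrep : S a b = Q (e (Sum.inl a)) (e (Sum.inl b)) := rfl
    rw [hrep]
    fin_cases a <;> fin_cases b <;> simp only [Sblk, Matrix.of_apply]
    · rw [skew_diag hskew]; norm_num
    · rw [he0, he1]; norm_num; rfl
    · rw [he0, he1, skew_apply hskew]; norm_num; rfl
    · rw [skew_diag hskew]; norm_num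
  have hBd : ∀ (a : Fin 2) (b : Fin k), ∃ c, B a b = g' * c := by
    intro a b
    exact hdvd (e (Sum.inl a)) (e (Sum.inr b))
  choose qB hqB using hBd
  set W : Matrix (Fin 2) (Fin k) R :=
    Matrix.of fun a b => if a.1 = 0 then qB 1 b else -(qB 0 b) with hW
  have hSW : S * W + B = 0 := by
    refine Matrix.ext fun a b => ?_
    rw [Matrix.add_apply, Matrix.mul_apply, Fin.sum_univ_two, hS]
    fin_cases a <;>
      simp only [Sblk, Matrix.of_apply, hW, Matrix.zero_apply] <;> norm_num
    · rw [hqB 0 b]; ring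
    · rw [hqB 1 b]; ring
  set E₀ : Matrix (Fin 2 ⊕ Fin k) (Fin 2 ⊕ Fin k) R := Matrix.fromBlocks 1 W 0 1 with hE₀
  have hE₀t : E₀ᵀ = Matrix.fromBlocks 1 0 Wᵀ 1 := by
    rw [hE₀, Matrix.fromBlocks_transpose, Matrix.transpose_one, Matrix.transpose_one,
      Matrix.transpose_zero]
  have hQ₀blocks : Q₀ = Matrix.fromBlocks S B C D := (Matrix.fromBlocks_toBlocks Q₀).symm
  have step1 : Q₀ * E₀ = Matrix.fromBlocks S 0 C (C*W + D) := by
    rw [hQ₀blocks, hE₀, Matrix.fromBlocks_multiply]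
    simp only [Matrix.mul_one, Matrix.mul_zero, add_zero, Matrix.one_mul,
      Matrix.zero_mul, zero_add]
    rw [hSW]
  set X : Matrix (Fin 2 ⊕ Fin k) (Fin 2 ⊕ Fin k) R := E₀ᵀ * Q₀ * E₀ with hXdef
  have hX : X = Matrix.fromBlocks S 0 (Wᵀ*S + C) (C*W + D) := by
    rw [hXdef, Matrix.mul_assoc, step1, hE₀t, Matrix.fromBlocks_multiply]
    simp only [Matrix.mul_one, Matrix.mul_zero, add_zero, Matrix.one_mul,
      Matrix.zero_mul, zero_add]
  have hXskew : Xᵀ = -X := by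
    rw [hXdef, Matrix.transpose_mul, Matrix.transpose_mul, Matrix.transpose_transpose,
      hskew₀]
    simp only [Matrix.neg_mul, Matrix.mul_neg, Matrix.mul_assoc]
  have h21 : Wᵀ * S + C = 0 := by
    have hb := congrArg Matrix.toBlocks₁₂ hXskew
    rw [hX, Matrix.fromBlocks_transpose, Matrix.toBlocks_fromBlocks₁₂] at hb
    have hneg : (-Matrix.fromBlocks S 0 (Wᵀ * S + C) (C*W + D)).toBlocks₁₂
        = -((Matrix.fromBlocks S 0 (Wᵀ * S + C) (C*W + D)).toBlocks₁₂) := rfl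
    rw [hneg, Matrix.toBlocks_fromBlocks₁₂, neg_zero] at hb
    have := congrArg Matrix.transpose hb
    rwa [Matrix.transpose_transpose, Matrix.transpose_zero] at this
  have hXfinal : X = Matrix.fromBlocks S 0 0 (C*W + D) := by rw [hX, h21]
  refine ⟨C*W + D, ?_, ?_, ?_⟩
  · have hb := congrArg Matrix.toBlocks₂₂ hXskew
    rw [hXfinal, Matrix.fromBlocks_transpose, Matrix.toBlocks_fromBlocks₂₂] at hb
    exact hb.trans (by refine Matrix.ext fun a b => ?_; rfl)
  · intro a b
    rw [Matrix.add_apply, Matrix.mul_apply]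
    refine dvd_add (Finset.dvd_sum fun c _ => ?_) ?_
    · exact (hdvd (e (Sum.inr a)) (e (Sum.inl c))).mul_right _
    · exact hdvd (e (Sum.inr a)) (e (Sum.inr b))
  · refine ⟨E₀.submatrix e.symm e.symm, ?_, ?_⟩
    · rw [Matrix.det_submatrix_equiv_self, hE₀, Matrix.det_fromBlocks_zero₂₁,
        Matrix.det_one, Matrix.det_one, mul_one]
      exact isUnit_one
    · have hQrep : Q = Q₀.submatrix e.symm e.symm := by
        rw [hQ₀]
        simp [Matrix.submatrix_submatrix]
      rw [Matrix.reindex_apply, Matrix.transpose_submatrix, hQrep,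
        Matrix.submatrix_mul_equiv, Matrix.submatrix_mul_equiv, ← hXdef, hXfinal, hS]

lemma skewSmith_entry_dvd {m r : ℕ} {q : R} {g : Fin r → R}
    (hq : ∀ a b, q ∣ skewSmith m r g a b) (hm : 2*r ≤ m) (t : Fin r) : q ∣ g t := by
  have ha : 2*t.1 < m := by omega
  have hb : 2*t.1+1 < m := by omega
  have hval : skewSmith m r g ⟨2*t.1, ha⟩ ⟨2*t.1+1, hb⟩ = g t := by
    rw [skewSmith, dif_pos ⟨rfl, by show 2*t.1 % 2 = 0; omega, by show 2*t.1+1 < 2*r; omega⟩]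
    congr 1
    exact Fin.ext (by show 2*t.1/2 = t.1; omega)
  have h2 := hq ⟨2*t.1, ha⟩ ⟨2*t.1+1, hb⟩
  rwa [hval] at h2


lemma cong_blockdiag {k : ℕ} (gm : R) (P₂ F₂ : Matrix (Fin k) (Fin k) R) (hF₂ : IsUnit F₂.det) :
    Cong (Matrix.reindex finSumFinEquiv finSumFinEquiv (Matrix.fromBlocks (Sblk gm) 0 0 P₂))
      (Matrix.reindex finSumFinEquiv finSumFinEquiv
        (Matrix.fromBlocks (Sblk gm) 0 0 (F₂ᵀ * P₂ * F₂))) := by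
  set e := (finSumFinEquiv : Fin 2 ⊕ Fin k ≃ Fin (2+k)) with hee
  set E₀ : Matrix (Fin 2 ⊕ Fin k) (Fin 2 ⊕ Fin k) R :=
    Matrix.fromBlocks 1 0 0 F₂ with hE₀
  refine ⟨E₀.submatrix e.symm e.symm, ?_, ?_⟩
  · rw [Matrix.det_submatrix_equiv_self, hE₀, Matrix.det_fromBlocks_zero₂₁,
      Matrix.det_one, one_mul]
    exact hF₂
  · have hE₀t : E₀ᵀ = Matrix.fromBlocks 1 0 0 F₂ᵀ := by
      rw [hE₀, Matrix.fromBlocks_transpose, Matrix.transpose_one, Matrix.transpose_zero,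
        Matrix.transpose_zero]
    have hmul : E₀ᵀ * Matrix.fromBlocks (Sblk gm) 0 0 P₂ * E₀
        = Matrix.fromBlocks (Sblk gm) 0 0 (F₂ᵀ * P₂ * F₂) := by
      rw [hE₀t, hE₀, Matrix.fromBlocks_multiply, Matrix.fromBlocks_multiply]
      simp only [Matrix.mul_one, Matrix.mul_zero, add_zero, Matrix.one_mul,
        Matrix.zero_mul, zero_add, Matrix.mul_assoc]
    rw [Matrix.reindex_apply, Matrix.reindex_apply, Matrix.transpose_submatrix,
      Matrix.submatrix_mul_equiv, Matrix.submatrix_mul_equiv, hmul]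

set_option maxHeartbeats 1000000 in
lemma goal_split {m : ℕ}
    (hIH : ∀ k, k < m → ∀ P₂ : Matrix (Fin k) (Fin k) R, P₂ᵀ = -P₂ → Goal k P₂)
    (P : Matrix (Fin m) (Fin m) R) (hP : Pᵀ = -P) {i j : Fin m} (hij : i ≠ j)
    (hgne : P i j ≠ 0) (hdvd : ∀ a b, P i j ∣ P a b) : Goal m P := by
  have h2m : 2 ≤ m := by
    have hne : i.1 ≠ j.1 := fun h => hij (Fin.ext h)
    omega
  have hm2 : m = 2 + (m - 2) := by omega
  set k := m - 2 with hk
  set z0 : Fin m := ⟨0, by omega⟩ with hz0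
  set z1 : Fin m := ⟨1, by omega⟩ with hz1
  set σ1 := Equiv.swap z0 i with hσ1
  set j' := σ1 j with hj'
  have hj'0 : j' ≠ z0 := by
    intro h
    have h2 := congrArg σ1 h
    rw [hj', Equiv.swap_apply_self, hσ1, Equiv.swap_apply_left] at h2
    exact hij h2.symm
  set σ2 := Equiv.swap z1 j' with hσ2
  set π := σ1 * σ2 with hπ
  have hz01 : z0 ≠ z1 := by
    intro h
    have h3 := congrArg Fin.val h
    simp [hz0, hz1] at h3
  have hπ0 : π z0 = i := by
    rw [hπ, Equiv.Perm.mul_apply, hσ2, Equiv.swap_apply_of_ne_of_ne hz01 (Ne.symm hj'0),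
      hσ1, Equiv.swap_apply_left]
  have hπ1 : π z1 = j := by
    rw [hπ, Equiv.Perm.mul_apply, hσ2, Equiv.swap_apply_left, hj', hσ1,
      Equiv.swap_apply_self]
  set Q := P.submatrix π π with hQ
  have hcongQ : Cong P Q := cong_perm P π
  have hQskew : Qᵀ = -Q := hcongQ.skew hP
  have hQval : Q z0 z1 = P i j := by rw [hQ, Matrix.submatrix_apply, hπ0, hπ1]
  have hQdvd : ∀ a b, Q z0 z1 ∣ Q a b := by
    intro a b
    rw [hQval, hQ, Matrix.submatrix_apply]
    exact hdvd _ _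
  refine hcongQ.goal (goal_cast hm2 Q ?_)
  set e2 : Fin (2+k) ≃ Fin m := finCongr hm2.symm with he2
  set Q2 : Matrix (Fin (2+k)) (Fin (2+k)) R := Q.submatrix e2 e2 with hQ2
  set i0' : Fin (2+k) := ⟨0, by omega⟩ with hi0'
  set i1' : Fin (2+k) := ⟨1, by omega⟩ with hi1'
  have hQ2skew : Q2ᵀ = -Q2 := by
    refine Matrix.ext fun a b => ?_
    simp only [hQ2, Matrix.transpose_apply, Matrix.submatrix_apply, Matrix.neg_apply]
    exact skew_apply hQskew _ _
  have he20 : e2 i0' = z0 := Fin.ext (by simp [he2, hi0', hz0])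
  have he21 : e2 i1' = z1 := Fin.ext (by simp [he2, hi1', hz1])
  have hQ2val : Q2 i0' i1' = Q z0 z1 := by
    rw [hQ2, Matrix.submatrix_apply, he20, he21]
  have hQ2dvd : ∀ a b, Q2 i0' i1' ∣ Q2 a b := by
    intro a b
    rw [hQ2val, hQ2, Matrix.submatrix_apply]
    exact hQdvd _ _
  obtain ⟨P₂, hP₂skew, hP₂dvd, hcong2⟩ := split_core Q2 hQ2skew i0' i1' rfl rfl hQ2dvd
  have hg'ne : Q2 i0' i1' ≠ 0 := by rw [hQ2val, hQval]; exact hgne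
  set u := Polynomial.C ((Q2 i0' i1').leadingCoeff)⁻¹ with hu_def
  have hu : IsUnit u := by
    rw [hu_def]
    exact Polynomial.isUnit_C.mpr (isUnit_iff_ne_zero.mpr
      (inv_ne_zero (Polynomial.leadingCoeff_ne_zero.mpr hg'ne)))
  set gm := Q2 i0' i1' * u with hgm_def
  have hgm : gm.Monic := Polynomial.monic_mul_leadingCoeff_inv hg'ne
  have hcong3 := hcong2.trans (cong_scale (Q2 i0' i1') u hu P₂)
  obtain ⟨r₂, hr₂, F₂, g₂, hF₂, hmon₂, hchain₂, heq₂⟩ := hIH k (by omega) P₂ hP₂skew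
  have hgm_of : ∀ x : R, Q2 i0' i1' ∣ x → gm ∣ x := by
    intro x hx
    refine dvd_trans ⟨(↑hu.unit⁻¹ : R), ?_⟩ hx
    rw [hgm_def, mul_assoc, IsUnit.mul_val_inv hu, mul_one]
  have hgmP₂ : ∀ a b, gm ∣ P₂ a b := fun a b => hgm_of _ (hP₂dvd a b)
  have hdvd₂ : ∀ t, gm ∣ g₂ t := by
    refine skewSmith_entry_dvd (fun a b => ?_) hr₂
    rw [← heq₂]
    exact dvd_entries_mul hgmP₂ F₂ᵀ F₂ a b
  have hcong4 := cong_blockdiag gm P₂ F₂ hF₂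
  rw [heq₂] at hcong4
  refine (hcong3.trans hcong4).goal
    (goal_of_eq _ (gcons gm g₂) (by omega) ?_ ?_ (goal_assemble hr₂ gm g₂))
  · intro t
    simp only [gcons]
    split_ifs
    · exact hgm
    · exact hmon₂ _
  · intro a b hab
    simp only [gcons]
    by_cases ha : a.1 = 0
    · rw [dif_pos ha]
      by_cases hb : b.1 = 0
      · rw [dif_pos hb]
      · rw [dif_neg hb]
        exact hdvd₂ _
    · have hb : ¬ b.1 = 0 := by rw [Fin.le_def] at hab; omega
      rw [dif_neg ha, dif_neg hb]
      refine hchain₂ _ _ ?_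
      rw [Fin.le_def] at hab ⊢
      show a.1 - 1 ≤ b.1 - 1
      omega

set_option maxHeartbeats 1000000 in
lemma existsGoal : ∀ m (P : Matrix (Fin m) (Fin m) R), Pᵀ = -P → Goal m P := by
  intro m
  induction m using Nat.strong_induction_on with
  | _ m IHm =>
  suffices H : ∀ d (P : Matrix (Fin m) (Fin m) R), Pᵀ = -P →
      (∃ i j, P i j ≠ 0 ∧ (P i j).natDegree ≤ d) → Goal m P by
    intro P hP
    by_cases h0 : P = 0
    · rw [h0]; exact goal_zero
    · have hex : ∃ i j, P i j ≠ 0 := by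
        by_contra hc
        push_neg at hc
        exact h0 (Matrix.ext fun i j => by rw [hc i j]; rfl)
      obtain ⟨i, j, hijne⟩ := hex
      exact H ((P i j).natDegree) P hP ⟨i, j, hijne, le_rfl⟩
  intro d
  induction d using Nat.strong_induction_on with
  | _ d IHd =>
  rintro P hP ⟨i0, j0, hne0, hdeg0⟩
  obtain ⟨⟨i, j⟩, hmem, hmin⟩ := Finset.exists_min_image
    ((Finset.univ ×ˢ Finset.univ).filter fun p : Fin m × Fin m => P p.1 p.2 ≠ 0)
    (fun p => (P p.1 p.2).natDegree) ⟨(i0, j0), by simp [hne0]⟩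
  simp only [Finset.mem_filter] at hmem
  have hgne : P i j ≠ 0 := hmem.2
  have hgmin : ∀ a b, P a b ≠ 0 → (P i j).natDegree ≤ (P a b).natDegree := by
    intro a b hab
    exact hmin (a, b) (by simp [hab])
  have hgd : (P i j).natDegree ≤ d := le_trans (hgmin i0 j0 hne0) hdeg0
  have hij : i ≠ j := by
    intro h; apply hgne; rw [h]; exact skew_diag hP j
  by_cases hdvd : ∀ a b, P i j ∣ P a b
  · -- SPLIT CASE
    exact goal_split (fun k hk P2 hP2 => IHm k hk P2 hP2) P hP hij hgne hdvd
  · -- REDUCE CASE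
    push_neg at hdvd
    obtain ⟨k, l, hkl⟩ := hdvd
    have finish : ∀ Q : Matrix (Fin m) (Fin m) R, Cong P Q →
        (∃ a b, Q a b ≠ 0 ∧ (Q a b).natDegree < (P i j).natDegree) → Goal m P := by
      rintro Q hcong ⟨a, b, hne, hdeg⟩
      exact hcong.goal (IHd ((Q a b).natDegree) (by omega) Q (hcong.skew hP)
        ⟨a, b, hne, le_rfl⟩)
    by_cases hrow : ∃ l', ¬ P i j ∣ P i l'
    · obtain ⟨l', hl'⟩ := hrow
      have hl'j : l' ≠ j := fun h => hl' (h ▸ dvd_rfl)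
      have hil' : i ≠ l' := by
        intro h
        exact hl' (by rw [← h, skew_diag hP i]; exact dvd_zero _)
      obtain ⟨q, hqne, hqdeg⟩ := remStep (P i j) (P i l') hgne hl'
      have hcong := cong_rcAdd P (Ne.symm hl'j) (skew_diag hP j) (-q)
      have hval : rcAdd P j l' (-q) i l' = P i l' - q * P i j := by
        rw [rcAdd_apply, if_neg hil', if_pos rfl]
        ring
      exact finish _ hcong ⟨i, l', by rw [hval]; exact hqne, by rw [hval]; exact hqdeg⟩
    · by_cases hcol : ∃ k', ¬ P i j ∣ P k' j
      · obtain ⟨k', hk'⟩ := hcol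
        have hk'i : k' ≠ i := fun h => hk' (h ▸ dvd_rfl)
        have hk'j : k' ≠ j := by
          intro h
          exact hk' (by rw [h, skew_diag hP j]; exact dvd_zero _)
        have hjk' : ¬ P i j ∣ P j k' := by
          intro hdd
          apply hk'
          rw [skew_apply hP j k']
          exact hdd.neg_right
        obtain ⟨q, hqne, hqdeg⟩ := remStep (P i j) (P j k') hgne hjk'
        have hcong := cong_rcAdd P (a := i) (b := k') (Ne.symm hk'i) (skew_diag hP i) q
        have hval : rcAdd P i k' q j k' = P j k' - q * P i j := by
          rw [rcAdd_apply, if_neg (Ne.symm hk'j), if_pos rfl, skew_apply hP i j]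
          ring
        exact finish _ hcong ⟨j, k', by rw [hval]; exact hqne, by rw [hval]; exact hqdeg⟩
      · push_neg at hrow hcol
        have hrowd : ∀ b, P i j ∣ P i b := hrow
        have hcold : ∀ a, P i j ∣ P a j := hcol
        have hki : k ≠ i := by
          intro h; exact hkl (h ▸ hrowd l)
        have hkj : k ≠ j := by
          intro h
          apply hkl
          rw [h, skew_apply hP l j]
          exact (hcold l).neg_right
        have hli : l ≠ i := by
          intro h
          apply hkl
          rw [h, skew_apply hP i k]
          exact (hrowd k).neg_right
        have hlj : l ≠ j := fun h => hkl (h ▸ hcold k)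
        have hklne : k ≠ l := by
          intro h
          apply hkl
          rw [← h, skew_diag hP k]
          exact dvd_zero _
        obtain ⟨q₁, hq₁⟩ := hcold k
        set P1 := rcAdd P i k (-q₁) with hP1def
        have hcong1 : Cong P P1 := cong_rcAdd P (Ne.symm hki) (skew_diag hP i) (-q₁)
        have hP1skew : P1ᵀ = -P1 := hcong1.skew hP
        have hP1ij : P1 i j = P i j := by
          rw [hP1def, rcAdd_apply, if_neg (Ne.symm hki), if_neg (Ne.symm hkj)]
          ring
        have hP1il : P1 i l = P i l := by
          rw [hP1def, rcAdd_apply, if_neg (Ne.symm hki), if_neg (Ne.symm hklne)]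
          ring
        have hP1kj : P1 k j = 0 := by
          rw [hP1def, rcAdd_apply, if_pos rfl, if_neg (Ne.symm hkj), hq₁]
          ring
        have hP1kl : P1 k l = P k l - q₁ * P i l := by
          rw [hP1def, rcAdd_apply, if_pos rfl, if_neg (Ne.symm hklne)]
          ring
        have hnd1 : ¬ P i j ∣ P1 k l := by
          rw [hP1kl]
          intro hdd
          apply hkl
          have h2 : P k l = (P k l - q₁ * P i l) + q₁ * P i l := by ring
          rw [h2]
          exact dvd_add hdd ((hrowd l).mul_left q₁)
        set P2 := rcAdd P1 k i 1 with hP2def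
        have hcong2 : Cong P1 P2 := cong_rcAdd P1 hki (skew_diag hP1skew k) 1
        have hP2skew : P2ᵀ = -P2 := hcong2.skew hP1skew
        have hP2ij : P2 i j = P i j := by
          rw [hP2def, rcAdd_apply, if_pos rfl, if_neg (Ne.symm hij), hP1kj, hP1ij]
          ring
        have hP2il : P2 i l = P1 i l + P1 k l := by
          rw [hP2def, rcAdd_apply, if_pos rfl, if_neg hli]
          ring
        have hnd2 : ¬ P i j ∣ P2 i l := by
          rw [hP2il]
          intro hdd
          apply hnd1
          have h2 : P1 k l = (P1 i l + P1 k l) - P1 i l := by ring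
          rw [h2]
          exact dvd_sub hdd (hP1il ▸ hrowd l)
        obtain ⟨q, hqne, hqdeg⟩ := remStep (P i j) (P2 i l) hgne hnd2
        have hcong3 : Cong P2 (rcAdd P2 j l (-q)) :=
          cong_rcAdd P2 (Ne.symm hlj) (skew_diag hP2skew j) (-q)
        have hval3 : rcAdd P2 j l (-q) i l = P2 i l - q * P i j := by
          rw [rcAdd_apply, if_neg (Ne.symm hli), if_pos rfl, hP2ij]
          ring
        exact finish _ (hcong1.trans (hcong2.trans hcong3))
          ⟨i, l, by rw [hval3]; exact hqne, by rw [hval3]; exact hqdeg⟩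

-- end aux
end SkewAux
end


/-- (Skew-symmetric Smith form.) Every skew-symmetric matrix polynomial
`P(λ)` is unimodularly congruent to a direct sum of `2 × 2` blocks
`[[0, g_j],[−g_j, 0]]` with `g_j` monic and `g_j ∣ g_{j+1}`, followed by a zero block;
`r` and `g_1, …, g_r` are uniquely determined by `P`. -/
theorem skew_symmetric_smith_form
    (m : ℕ) (P : Matrix (Fin m) (Fin m) (Polynomial ℂ)) (hP : Pᵀ = -P) :
    ∃ (r : ℕ) (_ : 2 * r ≤ m) (F : Matrix (Fin m) (Fin m) (Polynomial ℂ))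
      (g : Fin r → Polynomial ℂ),
      IsUnit F.det ∧
      (∀ j, (g j).Monic) ∧
      (∀ (j : ℕ) (hj : j + 1 < r), g ⟨j, by omega⟩ ∣ g ⟨j + 1, hj⟩) ∧
      Fᵀ * P * F = skewSmith m r g ∧
      (∀ (r' : ℕ) (F' : Matrix (Fin m) (Fin m) (Polynomial ℂ))
        (g' : Fin r' → Polynomial ℂ),
        2 * r' ≤ m → IsUnit F'.det → (∀ j, (g' j).Monic) →
        (∀ (j : ℕ) (hj : j + 1 < r'), g' ⟨j, by omega⟩ ∣ g' ⟨j + 1, hj⟩) →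
        F'ᵀ * P * F' = skewSmith m r' g' →
        r' = r ∧ ∀ (j : ℕ) (hj : j < r) (hj' : j < r'), g' ⟨j, hj'⟩ = g ⟨j, hj⟩) := by
  obtain ⟨r, hr, F, g, hF, hmon, hchain, heq⟩ := SkewAux.existsGoal m P hP
  refine ⟨r, hr, F, g, hF, hmon, ?_, heq, ?_⟩
  · intro j hj
    exact hchain ⟨j, by omega⟩ ⟨j+1, hj⟩ (by rw [Fin.le_def]; show j ≤ j + 1; omega)
  · intro r' F' g' hr' hF' hmon' hchain' heq'
    set G := F⁻¹ * F' with hG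
    have hFG : F * G = F' := by
      rw [hG, ← Matrix.mul_assoc, Matrix.mul_nonsing_inv _ hF, Matrix.one_mul]
    have hGdet : IsUnit G.det := by
      rw [hG, Matrix.det_mul]
      exact (Matrix.isUnit_nonsing_inv_det F hF).mul hF'
    have heqG : skewSmith m r' g' = Gᵀ * skewSmith m r g * G := by
      rw [← heq', ← heq, ← hFG, Matrix.transpose_mul]
      simp only [Matrix.mul_assoc]
    exact SkewAux.skewSmith_unique g g' hr hr' hmon hmon' hchain
      (SkewAux.chain_mono hchain') G hGdet heqG
end
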